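/- arXiv:1406.5895 — 7 statements merged into one kernel-verified Lean document; each statement's English description precedes it below -/
import Mathlib

section
/- For every integer n > 0 there exists a universal Lyndon word of degree n. -/
/-- `v` is a conjugate (cyclic rotation) of `w` : `w = w₁w₂` and `v = w₂w₁`. -/
def IsConjugate {α : Type*} (w v : List α) : Prop :=
  ∃ w₁ w₂ : List α, w = w₁ ++ w₂ ∧ v = w₂ ++ w₁

/-- `u` is a cyclic factor of `w` : `u` is a factor of `ww` and `|u| ≤ |w|`. -/
def IsCyclicFactor {α : Type*} (w u : List α) : Prop :=
  u <:+: (w ++ w) ∧ u.length ≤ w.length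

/-- The number of occurrences of `u` as a cyclic factor of `w`, i.e. the number of
occurrences of `u` in `ww` beginning at one of the first `|w|` positions. -/
def cyclicOcc {α : Type*} [DecidableEq α] (w u : List α) : ℕ :=
  ((Finset.range w.length).filter fun i => u <+: (w ++ w).drop i).card

/-- `w` is lexicographically strictly smaller, with respect to the lexicographic order
induced by the order `r` on the letters, than all of its proper conjugates. -/
def IsLyndonWith {n : ℕ} (r : Fin n → Fin n → Prop) (w : List (Fin n)) : Prop :=
  ∀ w₁ w₂ : List (Fin n), w = w₁ ++ w₂ → w₁ ≠ [] → w₂ ≠ [] →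
    List.Lex r w (w₂ ++ w₁)

/-- `w` is a Lyndon word: it is Lyndon with respect to some total order on the alphabet. -/
def IsLyndon {n : ℕ} (w : List (Fin n)) : Prop :=
  ∃ r : Fin n → Fin n → Prop, IsStrictTotalOrder (Fin n) r ∧ IsLyndonWith r w

/-- A universal Lyndon word of degree `n` : a word over `Σ_n` of length `n!`
all of whose conjugates are Lyndon words. -/
def IsULW (n : ℕ) (w : List (Fin n)) : Prop :=
  w.length = Nat.factorial n ∧ ∀ v, IsConjugate w v → IsLyndon v

def sw : ℕ → ℕ → ℕ
  | 0, _ => 1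
  | 1, _ => 1
  | (d+2), j =>
      let m := d+2
      let i := (j % Nat.factorial m) / m
      let off := (j % Nat.factorial m) % m
      if off < d then sw (d+1) (i + off)
      else if off = d then
        (∑ a ∈ Finset.Icc 1 (d+1), a) - ∑ s ∈ Finset.range d, sw (d+1) (i + s)
      else d+2

def missW (e i : ℕ) : ℕ :=
  (∑ a ∈ Finset.Icc 1 e, a) - ∑ s ∈ Finset.range (e-1), sw e (i+s)

lemma sw_mod : ∀ n j, sw n j = sw n (j % Nat.factorial n)
  | 0, _ => rfl
  | 1, _ => rfl
  | (d+2), j => by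
      simp only [sw, Nat.mod_mod_of_dvd _ (dvd_refl _)]

lemma sw_congr {n j k : ℕ} (h : j % Nat.factorial n = k % Nat.factorial n) :
    sw n j = sw n k := by
  rw [sw_mod n j, sw_mod n k, h]

lemma sw_congr' {n j k : ℕ} (h : j % Nat.factorial n = k % Nat.factorial n) (s : ℕ) :
    sw n (j + s) = sw n (k + s) :=
  sw_congr (Nat.ModEq.add_right s h)

lemma missW_congr {e i i' : ℕ} (h : i % Nat.factorial e = i' % Nat.factorial e) :
    missW e i = missW e i' := by
  unfold missW
  congr 1
  exact Finset.sum_congr rfl fun s _ => sw_congr' h s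

def blockV (d i u : ℕ) : ℕ :=
  if u < d then sw (d+1) (i+u) else if u = d then missW (d+1) i else d+2

lemma blockV_congr {d i i' : ℕ} (h : i % Nat.factorial (d+1) = i' % Nat.factorial (d+1))
    (u : ℕ) : blockV d i u = blockV d i' u := by
  unfold blockV
  split_ifs
  · exact sw_congr' h u
  · exact missW_congr h
  · rfl

lemma key_mod (d i u : ℕ) (hu : u < d+2) :
    (i*(d+2)+u) % Nat.factorial (d+2) = (i % Nat.factorial (d+1))*(d+2) + u := by
  have hf : Nat.factorial (d+2) = Nat.factorial (d+1) * (d+2) := by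
    rw [Nat.factorial_succ]; ring
  set N := Nat.factorial (d+1) with hN
  have hNpos : 0 < N := Nat.factorial_pos _
  have h1 : i = N * (i / N) + i % N := (Nat.div_add_mod i N).symm
  have hr : i % N < N := Nat.mod_lt _ hNpos
  calc (i*(d+2)+u) % Nat.factorial (d+2)
      = ((N * (i / N) + i % N)*(d+2)+u) % (N * (d+2)) := by rw [← h1, hf]
    _ = ((i % N)*(d+2) + u + (i/N) * (N*(d+2))) % (N * (d+2)) := by ring_nf
    _ = ((i % N)*(d+2) + u) % (N * (d+2)) := by rw [Nat.add_mul_mod_self_right]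
    _ = (i % N)*(d+2) + u := by
        apply Nat.mod_eq_of_lt
        have h2 : (i % N)*(d+2) + (d+2) ≤ N * (d+2) := by
          calc (i % N)*(d+2) + (d+2) = ((i % N)+1) * (d+2) := by ring
            _ ≤ N * (d+2) := Nat.mul_le_mul_right _ hr
        omega

lemma sw_block (d i u : ℕ) (hu : u < d+2) :
    sw (d+2) (i*(d+2)+u) = blockV d i u := by
  have hdiv : ((i % Nat.factorial (d+1))*(d+2) + u) / (d+2) = i % Nat.factorial (d+1) := by
    rw [Nat.add_comm, Nat.add_mul_div_right _ _ (by omega : 0 < d+2), Nat.div_eq_of_lt hu]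
    omega
  have hmod : ((i % Nat.factorial (d+1))*(d+2) + u) % (d+2) = u := by
    rw [Nat.add_comm, Nat.add_mul_mod_self_right, Nat.mod_eq_of_lt hu]
  show (if ((i*(d+2)+u) % Nat.factorial (d+2)) % (d+2) < d then
      sw (d+1) (((i*(d+2)+u) % Nat.factorial (d+2)) / (d+2) + ((i*(d+2)+u) % Nat.factorial (d+2)) % (d+2))
    else if ((i*(d+2)+u) % Nat.factorial (d+2)) % (d+2) = d then
      (∑ a ∈ Finset.Icc 1 (d+1), a) - ∑ s ∈ Finset.range d, sw (d+1) (((i*(d+2)+u) % Nat.factorial (d+2)) / (d+2) + s)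
    else d+2) = blockV d i u
  rw [key_mod d i u hu, hdiv, hmod]
  have h3 : (if u < d then sw (d+1) ((i % Nat.factorial (d+1))+u)
      else if u = d then (∑ a ∈ Finset.Icc 1 (d+1), a) - ∑ s ∈ Finset.range d, sw (d+1) ((i % Nat.factorial (d+1)) + s)
      else d+2) = blockV d (i % Nat.factorial (d+1)) u := by
    unfold blockV missW
    norm_num
  rw [h3]
  exact blockV_congr (Nat.mod_mod_of_dvd _ (dvd_refl _)) u

lemma miss_spec (e : ℕ) (he : 1 ≤ e) (i : ℕ)
    (h1 : ∀ j, 1 ≤ sw e j ∧ sw e j ≤ e)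
    (h2 : ∀ p s t, s < t → t < e-1 → sw e (p+s) ≠ sw e (p+t)) :
    (1 ≤ missW e i ∧ missW e i ≤ e) ∧
    (∀ s, s < e-1 → missW e i ≠ sw e (i+s)) ∧
    (∀ a, 1 ≤ a → a ≤ e → (a = missW e i ∨ ∃ s, s < e-1 ∧ sw e (i+s) = a)) := by
  classical
  set f : ℕ → ℕ := fun s => sw e (i+s) with hf
  have hinj : Set.InjOn f (Finset.range (e-1)) := by
    intro s hs t ht hst
    simp only [Finset.coe_range, Set.mem_Iio] at hs ht
    by_contra hne
    rcases Nat.lt_or_ge s t with h | h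
    · exact h2 i s t h ht hst
    · exact h2 i t s (by omega) hs hst.symm
  set T : Finset ℕ := (Finset.range (e-1)).image f with hT
  have hcardT : T.card = e - 1 := by
    rw [hT, Finset.card_image_of_injOn hinj, Finset.card_range]
  have hsub : T ⊆ Finset.Icc 1 e := by
    intro a ha
    rw [hT, Finset.mem_image] at ha
    obtain ⟨s, _, rfl⟩ := ha
    exact Finset.mem_Icc.mpr (h1 _)
  have hcardIcc : (Finset.Icc 1 e).card = e := by
    rw [Nat.card_Icc]; omega
  have hcardC : (Finset.Icc 1 e \ T).card = 1 := by
    rw [Finset.card_sdiff_of_subset hsub, hcardT, hcardIcc]; omega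
  obtain ⟨a, ha⟩ := Finset.card_eq_one.mp hcardC
  have hsum : ∑ x ∈ Finset.Icc 1 e, x = a + ∑ x ∈ T, x := by
    rw [← Finset.sum_sdiff hsub, ha, Finset.sum_singleton]
  have hsumT : ∑ x ∈ T, x = ∑ s ∈ Finset.range (e-1), f s := by
    rw [hT, Finset.sum_image]
    intro x hx y hy hxy
    exact hinj (by simpa using hx) (by simpa using hy) hxy
  have hmiss : missW e i = a := by
    unfold missW
    rw [← hf, ← hsumT, hsum]
    omega
  have haC : a ∈ Finset.Icc 1 e \ T := by rw [ha]; exact Finset.mem_singleton_self a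
  rw [Finset.mem_sdiff, Finset.mem_Icc] at haC
  refine ⟨⟨by omega, by omega⟩, ?_, ?_⟩
  · intro s hs
    rw [hmiss]
    intro hcon
    exact haC.2 (by rw [hT]; exact Finset.mem_image.mpr ⟨s, Finset.mem_range.mpr hs, hcon.symm⟩)
  · intro b hb1 hb2
    by_cases hbT : b ∈ T
    · right
      rw [hT, Finset.mem_image] at hbT
      obtain ⟨s, hs, rfl⟩ := hbT
      exact ⟨s, Finset.mem_range.mp hs, rfl⟩
    · left
      rw [hmiss]
      have hb : b ∈ Finset.Icc 1 e \ T := Finset.mem_sdiff.mpr ⟨Finset.mem_Icc.mpr ⟨hb1, hb2⟩, hbT⟩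
      rw [ha, Finset.mem_singleton] at hb
      exact hb

theorem sw_inv : ∀ d : ℕ,
    (∀ j, 1 ≤ sw (d+1) j ∧ sw (d+1) j ≤ d+1) ∧
    (∀ p s t, s < t → t < d → sw (d+1) (p+s) ≠ sw (d+1) (p+t)) ∧
    (∀ p q, (∀ s, s < d → sw (d+1) (p+s) = sw (d+1) (q+s)) →
      p % Nat.factorial (d+1) = q % Nat.factorial (d+1)) := by
  intro d
  induction d with
  | zero =>
      refine ⟨fun j => ⟨le_refl 1, le_refl 1⟩, fun p s t hst ht => by omega, fun p q _ => ?_⟩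
      simp [Nat.factorial]
      omega
  | succ d IH =>
      obtain ⟨IH1, IH2, IH3⟩ := IH
      set N := Nat.factorial (d+1) with hN
      -- miss facts
      have hms := fun i => miss_spec (d+1) (by omega) i IH1 IH2
      -- blockV bounds
      have bv_le : ∀ i u, u ≤ d → 1 ≤ blockV d i u ∧ blockV d i u ≤ d+1 := by
        intro i u hu
        unfold blockV
        split_ifs with h1 h2
        · exact IH1 _
        · exact (hms i).1
        · omega
      have bv_all : ∀ i u, u ≤ d+1 → 1 ≤ blockV d i u ∧ blockV d i u ≤ d+2 := by
        intro i u hu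
        rcases Nat.lt_or_ge u (d+1) with h | h
        · have := bv_le i u (by omega); omega
        · have hu' : u = d+1 := by omega
          subst hu'
          unfold blockV
          simp only [if_neg (by omega : ¬ (d+1 < d)), if_neg (by omega : ¬ (d+1 = d))]
          omega
      have bv_top : ∀ i u, u ≤ d+1 → (blockV d i u = d+2 ↔ u = d+1) := by
        intro i u hu
        constructor
        · intro h
          by_contra hne
          have := bv_le i u (by omega)
          omega
        · intro h
          subst h
          unfold blockV
          simp only [if_neg (by omega : ¬ (d+1 < d)), if_neg (by omega : ¬ (d+1 = d))]
      -- entry lemma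
      have ENT : ∀ i off s, off < d+2 → s ≤ d →
          sw (d+2) (i*(d+2)+off+s) =
            if off+s < d+2 then blockV d i (off+s) else blockV d (i+1) (off+s-(d+2)) := by
        intro i off s hoff hs
        rcases Nat.lt_or_ge (off+s) (d+2) with h | h
        · rw [if_pos h, show i*(d+2)+off+s = i*(d+2)+(off+s) by ring]
          exact sw_block d i (off+s) h
        · rw [if_neg (by omega)]
          have harr : i*(d+2)+off+s = (i+1)*(d+2)+(off+s-(d+2)) := by
            have : off + s ≥ d+2 := h
            ring_nf
            omega
          rw [harr]
          exact sw_block d (i+1) (off+s-(d+2)) (by omega)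
      refine ⟨?_, ?_, ?_⟩
      -- (1) values
      · intro j
        have hj : j = (j/(d+2))*(d+2) + j%(d+2) := by
          rw [Nat.mul_comm]
          exact (Nat.div_add_mod j (d+2)).symm
        rw [hj, sw_block d _ _ (Nat.mod_lt _ (by omega))]
        exact bv_all _ _ (by have := Nat.mod_lt j (show 0 < d+2 by omega); omega)
      -- (2) window nodup
      · intro p s t hst ht
        have hp : p = (p/(d+2))*(d+2) + p%(d+2) := by
          rw [Nat.mul_comm]; exact (Nat.div_add_mod p (d+2)).symm
        set i := p/(d+2)
        set off := p%(d+2) with hoffdef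
        have hoff : off < d+2 := Nat.mod_lt _ (by omega)
        rw [hp]
        rw [ENT i off s hoff (by omega), ENT i off t hoff (by omega)]
        have bv_base : ∀ i' u, u < d → blockV d i' u = sw (d+1) (i'+u) := by
          intro i' u hu; unfold blockV; rw [if_pos hu]
        have bv_miss : ∀ i', blockV d i' d = missW (d+1) i' := by
          intro i'; unfold blockV
          rw [if_neg (by omega), if_pos rfl]
        have bv_last : ∀ i', blockV d i' (d+1) = d+2 := by
          intro i'; unfold blockV
          rw [if_neg (by omega), if_neg (by omega)]
        have EQs : ∀ (x : ℕ), x ≤ d → off + x < d+2 →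
            (if off+x < d+2 then blockV d i (off+x) else blockV d (i+1) (off+x-(d+2)))
              = blockV d i (off+x) := fun x _ h => if_pos h
        have EQs' : ∀ (x : ℕ), x ≤ d → ¬ (off + x < d+2) →
            (if off+x < d+2 then blockV d i (off+x) else blockV d (i+1) (off+x-(d+2)))
              = blockV d (i+1) (off+x-(d+2)) := fun x _ h => if_neg h
        rcases Nat.lt_or_ge (off+t) (d+2) with hBt | hBt
        · rw [EQs s (by omega) (by omega), EQs t (by omega) hBt]
          rcases Nat.lt_or_ge (off+t) d with hB | hB
          · rw [bv_base _ _ (by omega), bv_base _ _ hB]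
            exact IH2 i (off+s) (off+t) (by omega) hB
          · rcases Nat.eq_or_lt_of_le hB with hB2 | hB2
            · rw [← hB2, bv_miss, bv_base _ _ (by omega)]
              exact fun hcon => (hms i).2.1 (off+s) (by omega) hcon.symm
            · have hA : off+t = d+1 := by omega
              rw [hA, bv_last]
              have := bv_le i (off+s) (by omega)
              omega
        · rw [EQs' t (by omega) (by omega)]
          have hB' : off+t-(d+2) < d := by omega
          rw [bv_base _ _ hB']
          have harr : i+1+(off+t-(d+2)) = i+((off+t-(d+2))+1) := by omega
          rcases Nat.lt_or_ge (off+s) (d+2) with hAs | hAs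
          · rw [EQs s (by omega) hAs]
            rcases Nat.lt_or_ge (off+s) d with hA | hA
            · rw [bv_base _ _ hA, harr]
              exact fun hcon =>
                IH2 i ((off+t-(d+2))+1) (off+s) (by omega) hA hcon.symm
            · rcases Nat.eq_or_lt_of_le hA with hA2 | hA2
              · rw [← hA2, bv_miss, harr]
                exact (hms i).2.1 ((off+t-(d+2))+1) (by omega)
              · have hA3 : off+s = d+1 := by omega
                rw [hA3, bv_last]
                have := IH1 (i+1+(off+t-(d+2)))
                omega
          · rw [EQs' s (by omega) (by omega), bv_base _ _ (by omega)]
            exact IH2 (i+1) (off+s-(d+2)) (off+t-(d+2)) (by omega) hB'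
      -- (3) windows determine position
      · intro p q hw
        classical
        have hp : p = (p/(d+2))*(d+2) + p%(d+2) := by
          rw [Nat.mul_comm]; exact (Nat.div_add_mod p (d+2)).symm
        have hq : q = (q/(d+2))*(d+2) + q%(d+2) := by
          rw [Nat.mul_comm]; exact (Nat.div_add_mod q (d+2)).symm
        set i := p/(d+2) with hidef
        set off := p%(d+2) with hoffdef
        set i' := q/(d+2) with hi'def
        set off' := q%(d+2) with hoff'def
        have hoff : off < d+2 := Nat.mod_lt _ (by omega)
        have hoff' : off' < d+2 := Nat.mod_lt _ (by omega)
        have Ep : ∀ s, s ≤ d → sw (d+2) (p+s) =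
            (if off+s < d+2 then blockV d i (off+s) else blockV d (i+1) (off+s-(d+2))) := by
          intro s hs
          conv_lhs => rw [hp]
          exact ENT i off s hoff hs
        have Eq2 : ∀ s, s ≤ d → sw (d+2) (q+s) =
            (if off'+s < d+2 then blockV d i' (off'+s) else blockV d (i'+1) (off'+s-(d+2))) := by
          intro s hs
          conv_lhs => rw [hq]
          exact ENT i' off' s hoff' hs
        have topchar : ∀ (ii oo : ℕ), oo < d+2 → ∀ s, s ≤ d →
            ((if oo+s < d+2 then blockV d ii (oo+s) else blockV d (ii+1) (oo+s-(d+2))) = d+2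
              ↔ oo+s = d+1) := by
          intro ii oo hoo s hs
          rcases Nat.lt_or_ge (oo+s) (d+2) with h | h
          · rw [if_pos h]
            exact bv_top ii (oo+s) (by omega)
          · rw [if_neg (by omega)]
            have h2 : oo+s-(d+2) < d := by omega
            constructor
            · intro hcon
              have := bv_le (ii+1) (oo+s-(d+2)) (by omega)
              omega
            · intro hcon; omega
        -- Step A : off = off'
        have hoo : off = off' := by
          by_cases h1 : off = 0
          · by_contra hne
            have hof1 : 1 ≤ off' := by omega
            have hs0 : off' + (d+1-off') = d+1 := by omega
            have e1 : sw (d+2) (q+(d+1-off')) = d+2 := by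
              rw [Eq2 _ (by omega)]
              exact (topchar i' off' hoff' _ (by omega)).mpr hs0
            have e2 : sw (d+2) (p+(d+1-off')) = d+2 := by
              rw [← hw _ (by omega)] at e1
              exact e1
            rw [Ep _ (by omega)] at e2
            have := (topchar i off hoff _ (by omega)).mp e2
            omega
          · have hof1 : 1 ≤ off := by omega
            have hs0 : off + (d+1-off) = d+1 := by omega
            have e1 : sw (d+2) (p+(d+1-off)) = d+2 := by
              rw [Ep _ (by omega)]
              exact (topchar i off hoff _ (by omega)).mpr hs0
            have e2 : sw (d+2) (q+(d+1-off)) = d+2 := by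
              rw [← hw _ (by omega)]
              exact e1
            rw [Eq2 _ (by omega)] at e2
            have := (topchar i' off' hoff' _ (by omega)).mp e2
            omega
        -- Step B : i % N = i' % N
        have bv_base : ∀ i2 u, u < d → blockV d i2 u = sw (d+1) (i2+u) := by
          intro i2 u hu; unfold blockV; rw [if_pos hu]
        have bv_miss : ∀ i2, blockV d i2 d = missW (d+1) i2 := by
          intro i2; unfold blockV
          rw [if_neg (by omega), if_pos rfl]
        have hiN : i % N = i' % N := by
          rcases Nat.lt_or_ge off (d+1) with hcase | hcase
          · rcases Nat.eq_zero_or_pos off with h0 | h0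
            · -- off = 0 : direct base window
              apply IH3
              intro s hs
              have h3 := hw s (by omega)
              rw [Ep _ (by omega), Eq2 _ (by omega)] at h3
              rw [if_pos (by omega), if_pos (by omega)] at h3
              rw [bv_base _ _ (by omega), bv_base _ _ (by omega)] at h3
              rw [h0, ← hoo, h0] at h3
              simpa using h3
            · -- 1 ≤ off ≤ d-1 < d  (general middle case, off < d)
              have hbase1 : ∀ u, off ≤ u → u < d → sw (d+1) (i+u) = sw (d+1) (i'+u) := by
                intro u hu1 hu2
                have h3 := hw (u-off) (by omega)
                rw [Ep _ (by omega), Eq2 _ (by omega)] at h3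
                rw [if_pos (by omega), if_pos (by omega)] at h3
                rw [show off+(u-off) = u by omega, ← hoo, show off+(u-off) = u by omega] at h3
                rw [bv_base _ _ hu2, bv_base _ _ hu2] at h3
                exact h3
              have hmisseq : missW (d+1) i = missW (d+1) i' := by
                have h3 := hw (d-off) (by omega)
                rw [Ep _ (by omega), Eq2 _ (by omega)] at h3
                rw [if_pos (by omega), if_pos (by omega)] at h3
                rw [show off+(d-off) = d by omega, ← hoo, show off+(d-off) = d by omega] at h3
                rw [bv_miss, bv_miss] at h3
                exact h3
              have hbase2 : ∀ u, 1 ≤ u → u < off → sw (d+1) (i+u) = sw (d+1) (i'+u) := by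
                intro u hu1 hu2
                have h3 := hw (d+1+u-off) (by omega)
                rw [Ep _ (by omega), Eq2 _ (by omega)] at h3
                rw [if_neg (by omega), if_neg (by omega)] at h3
                rw [← hoo] at h3
                rw [show off+(d+1+u-off)-(d+2) = u-1 by omega] at h3
                rw [bv_base _ _ (by omega), bv_base _ _ (by omega)] at h3
                rw [show i+1+(u-1) = i+u by omega, show i'+1+(u-1) = i'+u by omega] at h3
                exact h3
              have hall : ∀ u, 1 ≤ u → u < d → sw (d+1) (i+u) = sw (d+1) (i'+u) := by
                intro u hu1 hu2
                rcases Nat.lt_or_ge u off with h | h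
                · exact hbase2 u hu1 h
                · exact hbase1 u h hu2
              -- reconstruction of position 0
              have hzero : sw (d+1) i = sw (d+1) i' := by
                set F : ℕ → ℕ := fun u => sw (d+1) (i+u) with hF
                set F' : ℕ → ℕ := fun u => sw (d+1) (i'+u) with hF'
                set T : Finset ℕ := (Finset.Ico 1 d).image F ∪ {missW (d+1) i} with hT
                have hTeq : T = (Finset.Ico 1 d).image F' ∪ {missW (d+1) i'} := by
                  rw [hT, hmisseq]
                  congr 1
                  apply Finset.image_congr
                  intro u hu
                  simp only [Finset.coe_Ico, Set.mem_Ico] at hu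
                  exact hall u hu.1 hu.2
                have hinj : Set.InjOn F (Finset.Ico 1 d) := by
                  intro u hu u2 hu2 huv
                  simp only [Finset.coe_Ico, Set.mem_Ico] at hu hu2
                  by_contra hne
                  rcases Nat.lt_or_ge u u2 with h | h
                  · exact IH2 i u u2 h hu2.2 huv
                  · exact IH2 i u2 u (by omega) hu.2 huv.symm
                have hcardim : ((Finset.Ico 1 d).image F).card = d - 1 := by
                  rw [Finset.card_image_of_injOn hinj, Nat.card_Ico]
                have hdisj : missW (d+1) i ∉ (Finset.Ico 1 d).image F := by
                  intro hcon
                  rw [Finset.mem_image] at hcon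
                  obtain ⟨u, hu, hval⟩ := hcon
                  simp only [Finset.mem_Ico] at hu
                  exact (hms i).2.1 u (by omega) hval.symm
                have hcardT : T.card = d := by
                  rw [hT, Finset.card_union_of_disjoint (by
                    rw [Finset.disjoint_singleton_right]; exact hdisj), hcardim,
                    Finset.card_singleton]
                  omega
                have hsub : T ⊆ Finset.Icc 1 (d+1) := by
                  intro a ha
                  rw [hT, Finset.mem_union] at ha
                  rcases ha with ha | ha
                  · rw [Finset.mem_image] at ha
                    obtain ⟨u, _, rfl⟩ := ha
                    exact Finset.mem_Icc.mpr (IH1 _)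
                  · rw [Finset.mem_singleton] at ha
                    subst ha
                    exact Finset.mem_Icc.mpr (hms i).1
                have hxT : sw (d+1) i ∉ T := by
                  rw [hT, Finset.mem_union]
                  rintro (hc | hc)
                  · rw [Finset.mem_image] at hc
                    obtain ⟨u, hu, hval⟩ := hc
                    simp only [Finset.mem_Ico] at hu
                    have : sw (d+1) (i+0) ≠ sw (d+1) (i+u) := IH2 i 0 u (by omega) hu.2
                    rw [Nat.add_zero] at this
                    exact this hval.symm
                  · rw [Finset.mem_singleton] at hc
                    have := (hms i).2.1 0 (by omega)
                    rw [Nat.add_zero] at this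
                    exact this hc.symm
                have hx'T : sw (d+1) i' ∉ T := by
                  rw [hTeq, Finset.mem_union]
                  rintro (hc | hc)
                  · rw [Finset.mem_image] at hc
                    obtain ⟨u, hu, hval⟩ := hc
                    simp only [Finset.mem_Ico] at hu
                    have : sw (d+1) (i'+0) ≠ sw (d+1) (i'+u) := IH2 i' 0 u (by omega) hu.2
                    rw [Nat.add_zero] at this
                    exact this hval.symm
                  · rw [Finset.mem_singleton] at hc
                    have := (hms i').2.1 0 (by omega)
                    rw [Nat.add_zero] at this
                    exact this hc.symm
                have hcardC : (Finset.Icc 1 (d+1) \ T).card = 1 := by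
                  rw [Finset.card_sdiff_of_subset hsub, hcardT, Nat.card_Icc]
                  omega
                obtain ⟨a, ha⟩ := Finset.card_eq_one.mp hcardC
                have hx : sw (d+1) i ∈ Finset.Icc 1 (d+1) \ T :=
                  Finset.mem_sdiff.mpr ⟨Finset.mem_Icc.mpr (IH1 _), hxT⟩
                have hx' : sw (d+1) i' ∈ Finset.Icc 1 (d+1) \ T :=
                  Finset.mem_sdiff.mpr ⟨Finset.mem_Icc.mpr (IH1 _), hx'T⟩
                rw [ha, Finset.mem_singleton] at hx hx'
                rw [hx, hx']
              apply IH3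
              intro u hu
              rcases Nat.eq_zero_or_pos u with h | h
              · rw [h, Nat.add_zero, Nat.add_zero]
                exact hzero
              · exact hall u h hu
          · -- off = d+1
            have hoffd1 : off = d+1 := by omega
            have h3 : ∀ u, u < d → sw (d+1) ((i+1)+u) = sw (d+1) ((i'+1)+u) := by
              intro u hu
              have h4 := hw (u+1) (by omega)
              rw [Ep _ (by omega), Eq2 _ (by omega)] at h4
              rw [if_neg (by omega), if_neg (by omega)] at h4
              rw [← hoo] at h4
              rw [show off+(u+1)-(d+2) = u by omega] at h4
              rw [bv_base _ _ (by omega), bv_base _ _ (by omega)] at h4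
              exact h4
            have h5 : (i+1) % N = (i'+1) % N := IH3 (i+1) (i'+1) h3
            exact Nat.ModEq.add_right_cancel' 1 h5
        -- conclude
        conv_lhs => rw [hp]
        conv_rhs => rw [hq]
        rw [key_mod d i off hoff, key_mod d i' off' hoff']
        rw [hiN, hoo]

lemma sw_val {n : ℕ} (hn : 1 ≤ n) (j : ℕ) : 1 ≤ sw n j ∧ sw n j ≤ n := by
  obtain ⟨d, rfl⟩ : ∃ d, n = d + 1 := ⟨n - 1, by omega⟩
  exact (sw_inv d).1 j

lemma sw_win_nodup {n : ℕ} (hn : 1 ≤ n) (p s t : ℕ) (hst : s < t) (ht : t < n - 1) :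
    sw n (p+s) ≠ sw n (p+t) := by
  obtain ⟨d, rfl⟩ : ∃ d, n = d + 1 := ⟨n - 1, by omega⟩
  exact (sw_inv d).2.1 p s t hst (by omega)

lemma sw_win_det {n : ℕ} (hn : 1 ≤ n) (p q : ℕ)
    (h : ∀ s, s < n - 1 → sw n (p+s) = sw n (q+s)) :
    p % Nat.factorial n = q % Nat.factorial n := by
  obtain ⟨d, rfl⟩ : ∃ d, n = d + 1 := ⟨n - 1, by omega⟩
  exact (sw_inv d).2.2 p q (fun s hs => h s (by omega))

/-- Lex from a first difference. -/
lemma lex_of_firstdiff {α : Type*} (r : α → α → Prop) :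
    ∀ (t : ℕ) (A B : List α),
      (∀ s, s < t → ∀ (hsA : s < A.length) (hsB : s < B.length), A[s] = B[s]) →
      ∀ (htA : t < A.length) (htB : t < B.length), r A[t] B[t] → List.Lex r A B := by
  intro t
  induction t with
  | zero =>
      intro A B _ htA htB hr
      match A, B with
      | a :: A', b :: B' => exact List.Lex.rel hr
  | succ t IH =>
      intro A B hpre htA htB hr
      match A, B with
      | a :: A', b :: B' =>
        have h0 : a = b := hpre 0 (by omega) (by simp) (by simp)
        subst h0
        apply List.Lex.cons
        apply IH A' B'
        · intro s hs hsA hsB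
          have := hpre (s+1) (by omega) (by simpa using Nat.succ_lt_succ hsA)
            (by simpa using Nat.succ_lt_succ hsB)
          simpa using this
        · simpa using hr

/-- There exist universal Lyndon words of degree `n` for every `n > 0`. -/
theorem stmt_1 (n : ℕ) (hn : 0 < n) : ∃ w : List (Fin n), IsULW n w := by
  classical
  set N := Nat.factorial n with hN
  have hNpos : 0 < N := Nat.factorial_pos n
  have hn1 : 1 ≤ n := hn
  -- the word as a function into Fin n
  set g : ℕ → Fin n := fun j => ⟨sw n j - 1, by have := sw_val hn1 j; omega⟩ with hg
  have hginj : ∀ j j', g j = g j' ↔ sw n j = sw n j' := by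
    intro j j'
    constructor
    · intro h
      have h2 : sw n j - 1 = sw n j' - 1 := congrArg Fin.val h
      have := sw_val hn1 j
      have := sw_val hn1 j'
      omega
    · intro h
      apply Fin.ext
      simp only [hg, h]
  have hgper : ∀ j, g (j + N) = g j := by
    intro j
    apply (hginj _ _).mpr
    apply sw_congr
    rw [hN, Nat.add_mod_right]
  -- rotations
  set rot : ℕ → List (Fin n) := fun k => (List.range N).map (fun j => g (k+j)) with hrot
  have rot_len : ∀ k, (rot k).length = N := by intro k; simp [hrot]
  have rot_get : ∀ k j (h : j < N), (rot k)[j]'(by rw [rot_len]; exact h) = g (k+j) := by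
    intro k j h
    simp [hrot]
  -- rotation of a split
  have conj_rot : ∀ k (A B : List (Fin n)), rot k = A ++ B →
      B ++ A = rot (k + A.length) := by
    intro k A B hAB
    have hlen : A.length + B.length = N := by
      have := rot_len k
      rw [hAB] at this
      simpa using this
    apply List.ext_getElem
    · simp [rot_len]; omega
    · intro j h1 h2
      rw [rot_get (k + A.length) j (by rw [rot_len] at h2; exact h2)]
      have h1' : j < N := by simp at h1; omega
      by_cases hj : j < B.length
      · rw [List.getElem_append_left hj]
        have e1 : B[j] = (A ++ B)[A.length + j]'(by simp; omega) := by
          rw [List.getElem_append_right (by omega)]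
          congr 1
          omega
        have e2 : (A ++ B)[A.length + j]'(by simp; omega) =
            (rot k)[A.length + j]'(by rw [rot_len]; omega) :=
          (List.getElem_of_eq hAB _).symm
        rw [e1, e2, rot_get k _ (by omega)]
        congr 1
        omega
      · rw [List.getElem_append_right (by omega)]
        have e1 : A[j - B.length]'(by simp at h1; omega) =
            (A ++ B)[j - B.length]'(by simp; simp at h1; omega) := by
          rw [List.getElem_append_left]
        have e2 : (A ++ B)[j - B.length]'(by simp; simp at h1; omega) =
            (rot k)[j - B.length]'(by rw [rot_len]; omega) :=
          (List.getElem_of_eq hAB _).symm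
        rw [e1, e2, rot_get k _ (by omega)]
        have harith : k + A.length + j = k + (j - B.length) + N := by omega
        rw [harith]
        exact (hgper _).symm
  -- every rotation is Lyndon
  have main : ∀ k, IsLyndon (rot k) := by
    intro k
    -- the order: by first occurrence
    set idx : Fin n → ℕ := fun a => Nat.find (p := fun s => g (k+s) = a ∨ s = N)
      ⟨N, Or.inr rfl⟩ with hidx
    set keyf : Fin n → ℕ := fun a => n * idx a + a.val with hkeyf
    have keyf_inj : ∀ a b, keyf a = keyf b → a = b := by
      intro a b h
      apply Fin.ext
      have ha : a.val < n := a.isLt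
      have hb : b.val < n := b.isLt
      simp only [hkeyf] at h
      -- n * idx a + a.val = n * idx b + b.val with vals < n forces vals equal
      have := Nat.add_mul_mod_self_left a.val n (idx a)
      have h1 : (n * idx a + a.val) % n = a.val := by
        rw [Nat.add_comm, Nat.add_mul_mod_self_left, Nat.mod_eq_of_lt ha]
      have h2 : (n * idx b + b.val) % n = b.val := by
        rw [Nat.add_comm, Nat.add_mul_mod_self_left, Nat.mod_eq_of_lt hb]
      rw [← h1, ← h2, h]
    set r : Fin n → Fin n → Prop := fun a b => keyf a < keyf b with hr
    haveI hirr : IsIrrefl (Fin n) r := ⟨fun a => by simp [hr]⟩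
    haveI htrans : IsTrans (Fin n) r := ⟨fun a b c h1 h2 => by simp only [hr] at *; omega⟩
    haveI htri : IsTrichotomous (Fin n) r := ⟨fun a b hab hba => by
      rcases lt_trichotomy (keyf a) (keyf b) with h | h | h
      · exact absurd h hab
      · exact keyf_inj a b h
      · exact absurd h hba⟩
    haveI hso : IsStrictOrder (Fin n) r := ⟨⟩
    refine ⟨r, ⟨⟩, ?_⟩
    -- Lyndon property
    intro w₁ w₂ hsplit h1 h2
    have hv' : w₂ ++ w₁ = rot (k + w₁.length) := conj_rot k w₁ w₂ hsplit
    set ℓ := w₁.length with hℓ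
    have hℓpos : 0 < ℓ := by
      rw [hℓ]
      cases w₁ with
      | nil => exact absurd rfl h1
      | cons a l => simp
    have hℓlt : ℓ < N := by
      have hlen : w₁.length + w₂.length = N := by
        have := rot_len k
        rw [hsplit] at this
        simpa using this
      have : 0 < w₂.length := by
        cases w₂ with
        | nil => exact absurd rfl h2
        | cons a l => simp
      omega
    set k' := k + ℓ with hk'
    have hne : k % N ≠ k' % N := by
      intro hcon
      rw [hk'] at hcon
      have hme : k + ℓ ≡ k + 0 [MOD N] := by
        unfold Nat.ModEq
        simpa using hcon.symm
      have h2 : ℓ ≡ 0 [MOD N] := Nat.ModEq.add_left_cancel' k hme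
      unfold Nat.ModEq at h2
      rw [Nat.mod_eq_of_lt hℓlt] at h2
      simp at h2
      omega
    -- first difference
    have hex : ∃ s, s < n - 1 ∧ sw n (k+s) ≠ sw n (k'+s) := by
      by_contra hcon
      push_neg at hcon
      exact hne (sw_win_det hn1 k k' (fun s hs => hcon s hs))
    obtain ⟨s₀, hs₀, hs₀ne⟩ := hex
    set t := Nat.find (p := fun s => sw n (k+s) ≠ sw n (k'+s)) ⟨s₀, hs₀ne⟩ with ht
    have htlt : t < n - 1 := by
      have h5 : t ≤ s₀ := Nat.find_le hs₀ne
      omega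
    have htne : sw n (k+t) ≠ sw n (k'+t) := Nat.find_spec (p := fun s => sw n (k+s) ≠ sw n (k'+s)) ⟨s₀, hs₀ne⟩
    have htmin : ∀ s, s < t → sw n (k+s) = sw n (k'+s) := by
      intro s hs
      have := Nat.find_min (p := fun s => sw n (k+s) ≠ sw n (k'+s)) ⟨s₀, hs₀ne⟩ hs
      tauto
    set x := g (k+t) with hx
    set y := g (k'+t) with hy
    have hxy : x ≠ y := fun hcon => htne ((hginj _ _).mp hcon)
    have htltN : t < N := by
      have : n - 1 < N := by
        rw [hN]
        have := Nat.self_le_factorial n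
        omega
      omega
    -- idx x = t
    have hidxx : idx x = t := by
      rw [hidx]
      rw [Nat.find_eq_iff]
      constructor
      · exact Or.inl rfl
      · intro s hs
        push_neg
        constructor
        · intro hcon
          exact sw_win_nodup hn1 k s t hs htlt ((hginj _ _).mp hcon)
        · omega
    -- idx y ≥ t + 1
    have hidxy : t + 1 ≤ idx y := by
      rw [hidx]
      rw [Nat.le_find_iff]
      intro s hs
      push_neg
      constructor
      · intro hcon
        rcases Nat.lt_or_ge s t with h | h
        · have h4 : g (k+s) = g (k'+s) := (hginj _ _).mpr (htmin s h)
          rw [h4] at hcon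
          exact sw_win_nodup hn1 k' s t h htlt ((hginj _ _).mp hcon)
        · have hst : s = t := by omega
          subst hst
          exact hxy (hx ▸ hy ▸ hcon.symm).symm
      · omega
    -- r x y
    have hrxy : r x y := by
      show keyf x < keyf y
      have hxv : x.val < n := x.isLt
      calc keyf x = n * idx x + x.val := rfl
        _ = n * t + x.val := by rw [hidxx]
        _ < n * t + n := by omega
        _ = n * (t+1) := by ring
        _ ≤ n * idx y := Nat.mul_le_mul_left n hidxy
        _ ≤ n * idx y + y.val := by omega
        _ = keyf y := rfl
    -- conclude via Lex
    rw [hv']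
    apply lex_of_firstdiff r t (rot k) (rot k')
    · intro s hs hsA hsB
      simp only [hrot, List.getElem_map, List.getElem_range]
      exact (hginj _ _).mpr (htmin s hs)
    · simp only [hrot, List.getElem_map, List.getElem_range]
      exact hrxy
    · simp only [hrot, List.length_map, List.length_range]
      exact htltN
    · simp only [hrot, List.length_map, List.length_range]
      exact htltN
  -- assemble
  refine ⟨rot 0, ?_, ?_⟩
  · exact rot_len 0
  · intro v hconj
    obtain ⟨w₁, w₂, hsplit, hv⟩ := hconj
    rw [hv, conj_rot 0 w₁ w₂ hsplit]
    exact main _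
end

section
/- A universal Lyndon word is cyclically square-free: no word of the form uu with u nonempty occurs as a cyclic factor of a universal Lyndon word. -/
section Aux

variable {α : Type*} {r : α → α → Prop}

lemma lex_irrefl_aux (hirr : ∀ a, ¬ r a a) : ∀ (x : List α), ¬ List.Lex r x x := by
  intro x
  induction x with
  | nil => intro h; cases h
  | cons a t ih =>
    intro h
    cases h with
    | cons h => exact ih h
    | rel h => exact hirr a h

lemma lex_cancel_left (hirr : ∀ a, ¬ r a a) :
    ∀ (x y z : List α), List.Lex r (x ++ y) (x ++ z) → List.Lex r y z := by
  intro x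
  induction x with
  | nil => intro y z h; exact h
  | cons a t ih =>
    intro y z h
    cases h with
    | cons h => exact ih y z h
    | rel h => exact absurd h (hirr a)

lemma lex_cancel_right (hirr : ∀ a, ¬ r a a) :
    ∀ (x y c : List α), x.length = y.length →
      List.Lex r (x ++ c) (y ++ c) → x = y ∨ List.Lex r x y := by
  intro x
  induction x with
  | nil =>
    intro y c hlen _
    left
    exact (List.length_eq_zero_iff.mp hlen.symm).symm
  | cons a t ih =>
    intro y c hlen h
    cases y with
    | nil => simp at hlen
    | cons b s =>
      simp only [List.length_cons, Nat.succ.injEq] at hlen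
      cases h with
      | rel h => exact Or.inr (List.Lex.rel h)
      | cons h =>
        rcases ih s c hlen h with h' | h'
        · exact Or.inl (by rw [h'])
        · exact Or.inr (List.Lex.cons h')

lemma lex_asymm_aux (hirr : ∀ a, ¬ r a a) (htr : Trans r r r) :
    ∀ (x y : List α), List.Lex r x y → List.Lex r y x → False := by
  intro x
  induction x with
  | nil => intro y _ h2; cases h2
  | cons a t ih =>
    intro y h1 h2
    cases y with
    | nil => cases h1
    | cons b s =>
      cases h1 with
      | cons h1 =>
        cases h2 with
        | cons h2 => exact ih s h1 h2
        | rel h2 => exact hirr _ h2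
      | rel h1 =>
        cases h2 with
        | cons h2 => exact hirr _ h1
        | rel h2 => exact hirr _ (htr.trans h1 h2)

lemma conj_trans {w v v' : List α}
    (h1 : IsConjugate w v) (h2 : IsConjugate v v') : IsConjugate w v' := by
  obtain ⟨a, b, hw, hv⟩ := h1
  obtain ⟨c, d, hv', hv''⟩ := h2
  rw [hv] at hv'
  rcases List.append_eq_append_iff.mp hv' with ⟨m, hc, hm⟩ | ⟨m, hb, hm⟩
  · exact ⟨m, d ++ b, by rw [hw, hm]; simp, by rw [hv'', hc]; simp⟩
  · exact ⟨a ++ c, m, by rw [hw, hb]; simp, by rw [hv'', hm]; simp⟩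

/-- From a cyclic factor of length ≤ |w|, produce a conjugate of `w` having it
as a prefix. -/
lemma conj_of_cyclicFactor {w x : List α} (h : IsCyclicFactor w x) :
    ∃ v s, IsConjugate w v ∧ v = x ++ s := by
  obtain ⟨⟨p, t, hpt⟩, hlen⟩ := h
  rw [List.append_assoc] at hpt
  rcases List.append_eq_append_iff.mp hpt with ⟨m, hw, hx⟩ | ⟨m, hp, hm⟩
  · -- w = p ++ m, x ++ t = m ++ w
    -- v := m ++ p is a conjugate; v ++ m = m ++ w = x ++ t
    have hvm : (m ++ p) ++ m = x ++ t := by rw [List.append_assoc, ← hw, ← hx]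
    have hlv : x.length ≤ m.length + p.length := by
      have hwl := congrArg List.length hw
      simp at hwl
      omega
    rcases List.append_eq_append_iff.mp hvm with ⟨q, hx', _⟩ | ⟨q, hmp, _⟩
    ·
      -- hx' : x = (m ++ p) ++ q
      have hq : q = [] := by
        have h1 := congrArg List.length hx'
        simp at h1
        exact List.length_eq_zero_iff.mp (by omega)
      exact ⟨m ++ p, [], ⟨p, m, hw, rfl⟩, by rw [hx', hq]; simp⟩
    · -- m ++ p = x ++ q
      exact ⟨m ++ p, q, ⟨p, m, hw, rfl⟩, hmp⟩
  · -- p = w ++ m, w = m ++ (x ++ t) ... check direction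
    exact ⟨(x ++ t) ++ m, t ++ m, ⟨m, x ++ t, hm, rfl⟩, by simp⟩

end Aux

/-- A universal Lyndon word is cyclically square-free: no word `uu` with `u` nonempty
occurs as a cyclic factor of a universal Lyndon word. -/
theorem stmt_3 (n : ℕ) (w : List (Fin n)) (hw : IsULW n w)
    (u : List (Fin n)) (hu : u ≠ []) :
    ¬ IsCyclicFactor w (u ++ u) := by
  intro hcf
  obtain ⟨v, s, hconj, hv⟩ := conj_of_cyclicFactor hcf
  rcases eq_or_ne s [] with rfl | hs
  · -- v = u ++ u, contradiction with Lyndon via the split (u, u)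
    obtain ⟨r, hsto, hL⟩ := hw.2 v hconj
    have := hL u u (by rw [hv]; simp) hu hu
    rw [hv] at this
    simp at this
    exact lex_irrefl_aux (fun a => hsto.irrefl a) _ this
  · -- v = u ++ u ++ s; pass to the conjugate v' = u ++ s ++ u
    have hconj' : IsConjugate w (u ++ s ++ u) := by
      refine conj_trans hconj ⟨u, u ++ s, ?_, ?_⟩
      · rw [hv]; simp
      · simp
    obtain ⟨r, hsto, hL⟩ := hw.2 _ hconj'
    have hirr : ∀ a, ¬ r a a := fun a => hsto.irrefl a
    have htr : Trans r r r := ⟨fun h1 h2 => hsto.trans _ _ _ h1 h2⟩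
    -- first rotation: split (u, s ++ u)
    have h1 : List.Lex r ((u ++ s) ++ u) ((s ++ u) ++ u) := by
      have := hL u (s ++ u) (by simp) hu (by simp [hu])
      simpa [List.append_assoc] using this
    -- second rotation: split (u ++ s, u)
    have h2 : List.Lex r (s ++ u) (u ++ s) := by
      have := hL (u ++ s) u (by simp) (by simp [hu]) hu
      have h' : List.Lex r (u ++ (s ++ u)) (u ++ (u ++ s)) := by
        simpa [List.append_assoc] using this
      exact lex_cancel_left hirr _ _ _ h'
    rcases lex_cancel_right hirr _ _ _ (by simp [Nat.add_comm]) h1 with heq | hlt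
    · rw [heq] at h2
      exact lex_irrefl_aux hirr _ h2
    · exact lex_asymm_aux hirr htr _ _ hlt h2
end

section
/- Let w be a universal Lyndon word of degree n. Then for every total order < on Σ_n there is exactly one conjugate of w that is a Lyndon word with respect to <, and every conjugate of w is a Lyndon word with respect to exactly one total order on Σ_n. -/
/- ### Auxiliary lemmas -/

/-- Any rotation by `i ≤ |w|` is a conjugate. -/
lemma conj_rotate {α : Type*} (w : List α) (i : ℕ) (hi : i ≤ w.length) :
    IsConjugate w (w.rotate i) :=
  ⟨w.take i, w.drop i, (List.take_append_drop i w).symm,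
    List.rotate_eq_drop_append_take hi⟩

/-- Any conjugate of a nonempty word is a rotation by some `i < |w|`. -/
lemma conj_exists {α : Type*} {w v : List α} (h : IsConjugate w v) (hw : 0 < w.length) :
    ∃ i < w.length, v = w.rotate i := by
  obtain ⟨w₁, w₂, h1, h2⟩ := h
  by_cases hw2 : w₂ = []
  · refine ⟨0, hw, ?_⟩
    subst hw2
    simp at h1 h2
    rw [List.rotate_zero, h1, h2]
  · refine ⟨w₁.length, ?_, ?_⟩
    · rw [h1, List.length_append]
      have := List.length_pos_iff.mpr hw2
      omega
    · rw [h1, h2, List.rotate_eq_drop_append_take (by simp), List.drop_left, List.take_left]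

/-- A Lyndon word w.r.t. `r` is Lex-smaller than any of its proper rotations. -/
lemma lyndonWith_lex_rotate {n : ℕ} {r : Fin n → Fin n → Prop} {u : List (Fin n)}
    (h : IsLyndonWith r u) {k : ℕ} (hk : 0 < k) (hk2 : k < u.length) :
    List.Lex r u (u.rotate k) := by
  have h1 : u = u.take k ++ u.drop k := (List.take_append_drop k u).symm
  have h2 := h (u.take k) (u.drop k) h1
    (List.ne_nil_of_length_pos (by rw [List.length_take]; omega))
    (List.ne_nil_of_length_pos (by rw [List.length_drop]; omega))
  rwa [← List.rotate_eq_drop_append_take hk2.le] at h2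

lemma sto_asymm {n : ℕ} {r : Fin n → Fin n → Prop} (hr : IsStrictTotalOrder (Fin n) r) :
    IsAsymm (Fin n) r :=
  ⟨fun a b h1 h2 => hr.irrefl a (hr.trans _ _ _ h1 h2)⟩

/-- Core uniqueness: rotations `i ≤ j < |w|` that are both Lyndon w.r.t. the same
strict total order coincide. -/
lemma unique_core {n : ℕ} {w : List (Fin n)} {r : Fin n → Fin n → Prop}
    (hr : IsStrictTotalOrder (Fin n) r) {i j : ℕ} (hij : i ≤ j) (hj : j < w.length)
    (hu : IsLyndonWith r (w.rotate i)) (hv : IsLyndonWith r (w.rotate j)) :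
    w.rotate i = w.rotate j := by
  by_cases hij' : i = j
  · rw [hij']
  · exfalso
    have hlt : i < j := lt_of_le_of_ne hij hij'
    have e1 : (w.rotate i).rotate (j - i) = w.rotate j := by
      rw [List.rotate_rotate, show i + (j - i) = j from by omega]
    have e2 : (w.rotate j).rotate (w.length - (j - i)) = w.rotate i := by
      rw [List.rotate_rotate, show j + (w.length - (j - i)) = w.length + i from by omega,
        ← List.rotate_rotate, List.rotate_length]
    have hlex1 : List.Lex r (w.rotate i) (w.rotate j) := by
      rw [← e1]
      exact lyndonWith_lex_rotate hu (by omega) (by rw [List.length_rotate]; omega)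
    have hlex2 : List.Lex r (w.rotate j) (w.rotate i) := by
      rw [← e2]
      exact lyndonWith_lex_rotate hv (by omega) (by rw [List.length_rotate]; omega)
    haveI := sto_asymm hr
    exact asymm_of (List.Lex r) hlex1 hlex2

/-- Per strict total order, at most one conjugate of `w` is Lyndon w.r.t. it. -/
lemma unique_of_order {n : ℕ} {w : List (Fin n)} {r : Fin n → Fin n → Prop}
    (hr : IsStrictTotalOrder (Fin n) r) {i j : ℕ} (hi : i < w.length) (hj : j < w.length)
    (hu : IsLyndonWith r (w.rotate i)) (hv : IsLyndonWith r (w.rotate j)) :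
    w.rotate i = w.rotate j := by
  rcases le_total i j with h | h
  · exact unique_core hr h hj hu hv
  · exact (unique_core hr h hi hv hu).symm

/-- The rotations of a ULW by `i < |w|` are pairwise distinct. -/
lemma rot_inj {n : ℕ} {w : List (Fin n)} (hw : IsULW n w) {i j : ℕ}
    (hi : i < w.length) (hj : j < w.length) (h : w.rotate i = w.rotate j) : i = j := by
  have core : ∀ i j : ℕ, i ≤ j → j < w.length → w.rotate i = w.rotate j → i = j := by
    intro i j hij hj h
    by_contra hij'
    have hlt : i < j := lt_of_le_of_ne hij hij'
    obtain ⟨r, hr, hlyn⟩ := hw.2 (w.rotate i) (conj_rotate w i (by omega))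
    have e1 : (w.rotate i).rotate (j - i) = w.rotate i := by
      rw [List.rotate_rotate, show i + (j - i) = j from by omega]
      exact h.symm
    have hlex : List.Lex r (w.rotate i) (w.rotate i) := by
      conv_rhs => rw [← e1]
      exact lyndonWith_lex_rotate hlyn (by omega) (by rw [List.length_rotate]; omega)
    haveI := sto_asymm hr
    exact asymm_of (List.Lex r) hlex hlex
  rcases le_total i j with hle | hle
  · exact core i j hle hj h
  · exact (core j i hle hi h.symm).symm

/-- Every strict total order on `Fin n` is induced by a permutation. -/
lemma order_perm {n : ℕ} {r : Fin n → Fin n → Prop} (hr : IsStrictTotalOrder (Fin n) r) :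
    ∃ σ : Equiv.Perm (Fin n), ∀ x y, r x y ↔ σ x < σ y := by
  classical
  set A : Fin n → Finset (Fin n) := fun x => Finset.univ.filter fun y => r y x with hA
  have hnotmem : ∀ x, x ∉ A x := by
    intro x
    simp only [hA, Finset.mem_filter, Finset.mem_univ, true_and]
    exact hr.irrefl x
  have hcard : ∀ x, (A x).card < n := by
    intro x
    have hss : A x ⊂ Finset.univ :=
      ⟨Finset.subset_univ _, fun hsub => hnotmem x (hsub (Finset.mem_univ x))⟩
    simpa using Finset.card_lt_card hss
  set f : Fin n → Fin n := fun x => ⟨(A x).card, hcard x⟩ with hf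
  have hmono : ∀ x y, r x y → f x < f y := by
    intro x y hxy
    have hsub : insert x (A x) ⊆ A y := by
      intro z hz
      rcases Finset.mem_insert.mp hz with rfl | hz
      · simp only [hA, Finset.mem_filter, Finset.mem_univ, true_and]
        exact hxy
      · simp only [hA, Finset.mem_filter, Finset.mem_univ, true_and] at hz ⊢
        exact hr.trans _ _ _ hz hxy
    have hle := Finset.card_le_card hsub
    rw [Finset.card_insert_of_notMem (hnotmem x)] at hle
    exact Fin.mk_lt_mk.mpr (by omega)
  have hiff : ∀ x y, r x y ↔ f x < f y := by
    intro x y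
    refine ⟨hmono x y, fun h => ?_⟩
    rcases trichotomous (r := r) x y with h1 | rfl | h1
    · exact h1
    · exact absurd h (lt_irrefl _)
    · exact absurd (hmono y x h1) (lt_asymm h)
  have hinj : Function.Injective f := by
    intro x y hxy
    rcases trichotomous (r := r) x y with h1 | rfl | h1
    · exact absurd (hmono _ _ h1) (by simp [hxy])
    · rfl
    · exact absurd (hmono _ _ h1) (by simp [hxy])
  exact ⟨Equiv.ofBijective f (Finite.injective_iff_bijective.mp hinj), fun x y => hiff x y⟩

/-- The order induced by a permutation is a strict total order. -/
lemma ord_sto {n : ℕ} (σ : Equiv.Perm (Fin n)) :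
    IsStrictTotalOrder (Fin n) (fun x y => σ x < σ y) := by
  haveI h1 : IsTrichotomous (Fin n) (fun x y => σ x < σ y) := by
    constructor
    intro x y
    intro h h'
    exact σ.injective (le_antisymm (not_lt.mp h') (not_lt.mp h))
  haveI h2 : IsIrrefl (Fin n) (fun x y => σ x < σ y) := ⟨fun x => lt_irrefl _⟩
  haveI h3 : IsTrans (Fin n) (fun x y => σ x < σ y) := ⟨fun _ _ _ => lt_trans⟩
  exact { toTrichotomous := h1, toIsStrictOrder := { toIrrefl := h2, toIsTrans := h3 } }

/-- For a universal Lyndon word `w` of degree `n` : every total order on `Σ_n` has exactly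
one conjugate of `w` that is Lyndon with respect to it, and every conjugate of `w` is
Lyndon with respect to exactly one total order on `Σ_n`. -/
theorem stmt_4 (n : ℕ) (w : List (Fin n)) (hw : IsULW n w) :
    (∀ r : Fin n → Fin n → Prop, IsStrictTotalOrder (Fin n) r →
      ∃! v : List (Fin n), IsConjugate w v ∧ IsLyndonWith r v) ∧
    (∀ v : List (Fin n), IsConjugate w v →
      ∃ r : Fin n → Fin n → Prop, IsStrictTotalOrder (Fin n) r ∧ IsLyndonWith r v ∧
        ∀ r' : Fin n → Fin n → Prop, IsStrictTotalOrder (Fin n) r' → IsLyndonWith r' v →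
          r' = r) := by
  classical
  have hlen := hw.1
  have hL : 0 < w.length := hlen ▸ Nat.factorial_pos n
  -- choice of a permutation-order for each rotation
  have hex : ∀ i : Fin (Nat.factorial n), ∃ σ : Equiv.Perm (Fin n),
      IsLyndonWith (fun x y => σ x < σ y) (w.rotate i) := by
    intro i
    have hi : (i : ℕ) < w.length := by rw [hlen]; exact i.isLt
    obtain ⟨r, hr, hlyn⟩ := hw.2 _ (conj_rotate w i hi.le)
    obtain ⟨σ, hσ⟩ := order_perm hr
    have hrσ : r = fun x y => σ x < σ y :=
      funext fun x => funext fun y => propext (hσ x y)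
    exact ⟨σ, by rw [hrσ] at hlyn; exact hlyn⟩
  choose f hf using hex
  have hfinj : Function.Injective f := by
    intro i j hij
    have hi : (i : ℕ) < w.length := by rw [hlen]; exact i.isLt
    have hj : (j : ℕ) < w.length := by rw [hlen]; exact j.isLt
    have hj' : IsLyndonWith (fun x y => (f i) x < (f i) y) (w.rotate j) := by
      rw [hij]; exact hf j
    exact Fin.ext (rot_inj hw hi hj (unique_of_order (ord_sto (f i)) hi hj (hf i) hj'))
  have hfsurj : Function.Surjective f := by
    have hb : Function.Bijective f :=
      (Fintype.bijective_iff_injective_and_card f).mpr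
        ⟨hfinj, by simp [Fintype.card_perm]⟩
    exact hb.2
  constructor
  · -- part 1
    intro r hr
    obtain ⟨σ, hσ⟩ := order_perm hr
    have hrσ : r = fun x y => σ x < σ y :=
      funext fun x => funext fun y => propext (hσ x y)
    obtain ⟨i, hi⟩ := hfsurj σ
    have hiL : (i : ℕ) < w.length := by rw [hlen]; exact i.isLt
    have hlyn : IsLyndonWith r (w.rotate i) := by
      rw [hrσ, ← hi]; exact hf i
    refine ⟨w.rotate i, ⟨conj_rotate w i hiL.le, hlyn⟩, ?_⟩
    rintro v ⟨hvconj, hvlyn⟩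
    obtain ⟨j, hjL, rfl⟩ := conj_exists hvconj hL
    exact unique_of_order hr hjL hiL hvlyn hlyn
  · -- part 2
    intro v hv
    obtain ⟨i, hiL, rfl⟩ := conj_exists hv hL
    set i' : Fin (Nat.factorial n) := ⟨i, by rw [← hlen]; exact hiL⟩ with hi'
    have key : ∀ r : Fin n → Fin n → Prop, IsStrictTotalOrder (Fin n) r →
        IsLyndonWith r (w.rotate i) → r = fun x y => (f i') x < (f i') y := by
      intro r hr hlyn
      obtain ⟨σ, hσ⟩ := order_perm hr
      have hrσ : r = fun x y => σ x < σ y :=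
        funext fun x => funext fun y => propext (hσ x y)
      obtain ⟨j, hj⟩ := hfsurj σ
      have hjL : (j : ℕ) < w.length := by rw [hlen]; exact j.isLt
      have h1 : IsLyndonWith r (w.rotate j) := by
        rw [hrσ, ← hj]; exact hf j
      have heq : w.rotate (j : ℕ) = w.rotate i :=
        unique_of_order hr hjL hiL h1 hlyn
      have hji : (j : ℕ) = i := rot_inj hw hjL hiL heq
      have hij' : i' = j := Fin.ext hji.symm
      rw [hrσ, hij', hj]
    have hlyn0 : IsLyndonWith (fun x y => (f i') x < (f i') y) (w.rotate i) := hf i'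
    exact ⟨fun x y => (f i') x < (f i') y, ord_sto (f i'), hlyn0,
      fun r' hr' hl' => key r' hr' hl'⟩
end

section
/- Let w be a universal Lyndon word of degree n and let u be a cyclic factor of w. For every conjugate v of w, letting ◂_v be the (unique) total order on Σ_n with respect to which v is a Lyndon word: u is a prefix of v if and only if ◂_v extends the partial order ⊲_u defined by u. -/
/-- The partial alphabet order `⊲_u` defined by the word `u` : `i ⊲_u j` iff `i` occurs
in `u` and either `j` does not occur in `u`, or the first occurrence of `i` in `u`
precedes the first occurrence of `j` in `u`. -/
def wordOrder {n : ℕ} (u : List (Fin n)) (i j : Fin n) : Prop :=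
  i ∈ u ∧ u.idxOf i < u.idxOf j

namespace ULW6

open List

/-! ### Generic `List.Lex` lemmas -/

section Lex

variable {α : Type*} {r : α → α → Prop}

lemma lex_irrefl (hirr : ∀ a, ¬ r a a) : ∀ l : List α, ¬ List.Lex r l l := by
  intro l h
  induction l with
  | nil => cases h
  | cons a l ih =>
    cases h with
    | rel h' => exact hirr a h'
    | cons h' => exact ih h'

lemma lex_peel (hirr : ∀ a, ¬ r a a) (p : List α) {l₁ l₂ : List α}
    (h : List.Lex r (p ++ l₁) (p ++ l₂)) : List.Lex r l₁ l₂ := by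
  induction p with
  | nil => exact h
  | cons a p ih =>
    cases h with
    | rel h' => exact absurd h' (hirr a)
    | cons h' => exact ih h'

lemma lex_append_cons (p : List α) {a b : α} (s t : List α) (hab : r a b) :
    List.Lex r (p ++ a :: s) (p ++ b :: t) := by
  induction p with
  | nil => exact List.Lex.rel hab
  | cons x p ih => exact List.Lex.cons ih

lemma lex_cons_ne {a b : α} {s t : List α} (h : List.Lex r (a :: s) (b :: t)) (hab : a ≠ b) :
    r a b := by
  cases h with
  | rel h' => exact h'
  | cons h' => exact absurd rfl hab

lemma lex_asymm (hirr : ∀ a, ¬ r a a) (hasy : ∀ a b, r a b → r b a → False) :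
    ∀ l₁ l₂ : List α, List.Lex r l₁ l₂ → List.Lex r l₂ l₁ → False := by
  intro l₁ l₂ h₁
  induction h₁ with
  | nil => intro h₂; cases h₂
  | @rel a l₁ b l₂ h =>
    intro h₂
    cases h₂ with
    | rel h' => exact hasy _ _ h h'
    | cons h' => exact hirr _ h
  | @cons a l₁ l₂ h ih =>
    intro h₂
    cases h₂ with
    | rel h' => exact hirr _ h'
    | cons h' => exact ih h'

/-- longest-common-prefix decomposition of two distinct lists of equal length -/
lemma exists_lcp : ∀ (l₁ l₂ : List α), l₁.length = l₂.length → l₁ ≠ l₂ →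
    ∃ (p s t : List α) (a b : α), l₁ = p ++ a :: s ∧ l₂ = p ++ b :: t ∧ a ≠ b := by
  intro l₁
  induction l₁ with
  | nil =>
    intro l₂ hl hne
    cases l₂ with
    | nil => exact absurd rfl hne
    | cons b t => simp at hl
  | cons a s ih =>
    intro l₂ hl hne
    cases l₂ with
    | nil => simp at hl
    | cons b t =>
      by_cases hab : a = b
      · subst hab
        have hst : s ≠ t := by
          intro h; exact hne (by rw [h])
        obtain ⟨p, s', t', x, y, h1, h2, hxy⟩ := ih t (by simpa using hl) hst
        exact ⟨a :: p, s', t', x, y, by simp [h1], by simp [h2], hxy⟩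
      · exact ⟨[], s, t, a, b, rfl, rfl, hab⟩

end Lex

lemma isConjugate_iff_rotated {α : Type*} {w v : List α} :
    IsConjugate w v ↔ w ~r v := by
  constructor
  · rintro ⟨w₁, w₂, h1, h2⟩
    refine ⟨w₁.length, ?_⟩
    have hle : w₁.length ≤ w.length := by rw [h1]; simp
    rw [List.rotate_eq_drop_append_take hle, h1, h2, List.drop_left, List.take_left]
  · rintro ⟨k, hk⟩
    rcases eq_or_ne w [] with h | h
    · subst h
      exact ⟨[], [], rfl, by simpa using hk.symm⟩
    · have hpos : 0 < w.length := List.length_pos_iff.mpr h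
      have hlt : k % w.length < w.length := Nat.mod_lt _ hpos
      refine ⟨w.take (k % w.length), w.drop (k % w.length), (List.take_append_drop _ w).symm, ?_⟩
      rw [← hk, ← List.rotate_mod, List.rotate_eq_drop_append_take hlt.le]

/-- a Lyndon word is < each of its rotations that differs from it -/
lemma lyndon_lex_rotate {q : Fin n → Fin n → Prop} {v T : List (Fin n)}
    (hq : IsLyndonWith q v) (hvne : v ≠ []) {k : ℕ} (hk : v.rotate k = T) (hne : T ≠ v) :
    List.Lex q v T := by
  have hl : 0 < v.length := List.length_pos_iff.mpr hvne
  have h1 : v.rotate (k % v.length) = T := by rw [List.rotate_mod]; exact hk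
  set k' := k % v.length with hk'
  have hk'lt : k' < v.length := Nat.mod_lt _ hl
  have hk'pos : 0 < k' := by
    rcases Nat.eq_zero_or_pos k' with h | h
    · exfalso; apply hne; rw [← h1, h, List.rotate_zero]
    · exact h
  have hT : T = v.drop k' ++ v.take k' := by
    rw [← h1, List.rotate_eq_drop_append_take hk'lt.le]
  have h2 := hq (v.take k') (v.drop k') (List.take_append_drop k' v).symm
    (by
      intro hnil
      rw [List.take_eq_nil_iff] at hnil
      rcases hnil with h | h
      · exact absurd h hk'pos.ne'
      · exact hvne h)
    (by
      intro hnil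
      rw [List.drop_eq_nil_iff] at hnil
      omega)
  rw [hT]; exact h2

/-- head of a Lyndon word is minimal among occurring letters -/
lemma lyndon_head_min {q : Fin n → Fin n → Prop} {b : Fin n} {v' : List (Fin n)}
    (hq : IsLyndonWith q (b :: v')) {a : Fin n} (ha : a ∈ b :: v') (hab : a ≠ b) :
    q b a := by
  obtain ⟨s, t, hst⟩ := List.append_of_mem ha
  have hs : s ≠ [] := by
    intro h
    rw [h, List.nil_append] at hst
    exact hab (by injection hst with h1 h2; exact h1.symm)
  have h1 := hq s (a :: t) hst hs (by simp)
  rw [List.cons_append] at h1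
  exact lex_cons_ne h1 (Ne.symm hab)

/-- the rotations of a word all of whose rotations are Lyndon are pairwise distinct -/
lemma rotate_inj_of_all_lyndon {w : List (Fin n)}
    (hly : ∀ v, IsConjugate w v → ∃ q : Fin n → Fin n → Prop,
      IsStrictTotalOrder (Fin n) q ∧ IsLyndonWith q v) :
    ∀ i j, i < w.length → j < w.length → w.rotate i = w.rotate j → i = j := by
  have key : ∀ i j, i < j → j < w.length → w.rotate i ≠ w.rotate j := by
    intro i j hij hj heq
    set u := w.rotate i with hu
    obtain ⟨q, hqsto, hq⟩ := hly u (isConjugate_iff_rotated.mpr ⟨i, rfl⟩)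
    have hulen : u.length = w.length := by rw [hu, List.length_rotate]
    have hu2 : u.rotate (j - i) = u := by
      rw [hu, List.rotate_rotate, Nat.add_sub_cancel' hij.le, ← hu, heq]
    have hm0 : 0 < j - i := Nat.sub_pos_of_lt hij
    have hmlt : j - i < u.length := by omega
    have hvne : u ≠ [] := by
      intro h; rw [h] at hulen; simp at hulen; omega
    have hlex := hq (u.take (j - i)) (u.drop (j - i)) (List.take_append_drop _ u).symm
      (by
        intro hnil
        rw [List.take_eq_nil_iff] at hnil
        rcases hnil with h | h
        · omega
        · exact hvne h)
      (by
        intro hnil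
        rw [List.drop_eq_nil_iff] at hnil
        omega)
    rw [← List.rotate_eq_drop_append_take hmlt.le, hu2] at hlex
    exact lex_irrefl (fun a => irrefl_of q a) u hlex
  intro i j hi hj heq
  rcases lt_trichotomy i j with h | h | h
  · exact absurd heq (key i j h hj)
  · exact h
  · exact absurd heq.symm (key j i h hi)


section rank
open scoped Classical

lemma sto_asymm {r : Fin n → Fin n → Prop} (hr : IsStrictTotalOrder (Fin n) r) :
    ∀ a b, r a b → r b a → False := fun a b h1 h2 =>
  irrefl_of r a (trans_of r h1 h2)

noncomputable def rk (r : Fin n → Fin n → Prop) (x : Fin n) : ℕ :=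
  (Finset.univ.filter fun z => r z x).card

lemma rk_iff {r : Fin n → Fin n → Prop} (hr : IsStrictTotalOrder (Fin n) r) {x y : Fin n} :
    r x y ↔ rk r x < rk r y := by
  constructor
  · intro h
    apply Finset.card_lt_card
    constructor
    · intro z hz
      simp only [Finset.mem_filter, Finset.mem_univ, true_and] at *
      exact trans_of r hz h
    · intro hsub
      have hx : x ∈ Finset.univ.filter fun z => r z y := by
        simp only [Finset.mem_filter, Finset.mem_univ, true_and]; exact h
      have := hsub hx
      simp only [Finset.mem_filter, Finset.mem_univ, true_and] at this
      exact irrefl_of r x this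
  · intro h
    rcases trichotomous_of r x y with h' | h' | h'
    · exact h'
    · subst h'; omega
    · exfalso
      have : rk r y < rk r x := by
        apply Finset.card_lt_card
        constructor
        · intro z hz
          simp only [Finset.mem_filter, Finset.mem_univ, true_and] at *
          exact trans_of r hz h'
        · intro hsub
          have hy : y ∈ Finset.univ.filter fun z => r z x := by
            simp only [Finset.mem_filter, Finset.mem_univ, true_and]; exact h'
          have := hsub hy
          simp only [Finset.mem_filter, Finset.mem_univ, true_and] at this
          exact irrefl_of r y this
      omega

lemma rk_lt {r : Fin n → Fin n → Prop} (hr : IsStrictTotalOrder (Fin n) r) (x : Fin n) :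
    rk r x < n := by
  have hsub : (Finset.univ.filter fun z => r z x) ⊆ Finset.univ.erase x := by
    intro z hz
    simp only [Finset.mem_filter, Finset.mem_univ, true_and] at hz
    apply Finset.mem_erase.mpr
    refine ⟨?_, Finset.mem_univ z⟩
    intro h; subst h; exact irrefl_of r z hz
  have := Finset.card_le_card hsub
  rw [Finset.card_erase_of_mem (Finset.mem_univ x)] at this
  simp only [Finset.card_univ, Fintype.card_fin] at this
  have hpos : 0 < n := x.pos
  unfold rk
  omega

noncomputable def rankFun (r : Fin n → Fin n → Prop) (hr : IsStrictTotalOrder (Fin n) r) :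
    Fin n → Fin n := fun x => ⟨rk r x, rk_lt hr x⟩

lemma rankFun_inj {r : Fin n → Fin n → Prop} (hr : IsStrictTotalOrder (Fin n) r) :
    Function.Injective (rankFun r hr) := by
  intro x y hxy
  have h : rk r x = rk r y := by
    have := congrArg Fin.val hxy
    simpa [rankFun] using this
  rcases trichotomous_of r x y with h' | h' | h'
  · rw [rk_iff hr] at h'; omega
  · exact h'
  · rw [rk_iff hr] at h'; omega

noncomputable def rankPerm (r : Fin n → Fin n → Prop) (hr : IsStrictTotalOrder (Fin n) r) :
    Equiv.Perm (Fin n) :=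
  Equiv.ofBijective (rankFun r hr) (Finite.injective_iff_bijective.mp (rankFun_inj hr))

lemma rankPerm_iff {r : Fin n → Fin n → Prop} (hr : IsStrictTotalOrder (Fin n) r) {x y : Fin n} :
    r x y ↔ (rankPerm r hr x : ℕ) < (rankPerm r hr y : ℕ) := by
  show r x y ↔ (rankFun r hr x : ℕ) < (rankFun r hr y : ℕ)
  simpa [rankFun] using rk_iff hr (x := x) (y := y)

end rank

lemma lyndonWith_congr {r r' : Fin n → Fin n → Prop} (h : ∀ x y, r x y ↔ r' x y)
    {v : List (Fin n)} (hv : IsLyndonWith r v) : IsLyndonWith r' v := by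
  intro w₁ w₂ h1 h2 h3
  exact List.Lex.imp (fun a b hab => (h a b).mp hab) _ _ (hv w₁ w₂ h1 h2 h3)

/-- two rotated Lyndon words w.r.t. the same order are equal -/
lemma lyndon_unique_word {q : Fin n → Fin n → Prop} (hsto : IsStrictTotalOrder (Fin n) q)
    {t₁ t₂ : List (Fin n)} (h12 : t₁ ~r t₂)
    (h₁ : IsLyndonWith q t₁) (h₂ : IsLyndonWith q t₂) : t₁ = t₂ := by
  by_contra hne
  rcases eq_or_ne t₁ [] with h | h
  · subst h
    have h2 : t₂ = [] := List.length_eq_zero_iff.mp (by simpa using h12.perm.length_eq.symm)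
    exact hne h2.symm
  have h21 := h12.symm
  obtain ⟨k, hk⟩ := h12
  obtain ⟨k', hk'⟩ := h21
  have hne2 : t₂ ≠ [] := by
    intro hh; rw [hh] at hk'; simp at hk'; exact h hk'.symm.symm
  have l₁ := lyndon_lex_rotate h₁ h hk (Ne.symm hne)
  have l₂ := lyndon_lex_rotate h₂ hne2 hk' hne
  exact lex_asymm (fun a => irrefl_of q a) (sto_asymm hsto) _ _ l₁ l₂

/-- KEY: each conjugate of a ULW is Lyndon w.r.t. (extensionally) at most one order -/
lemma order_unique {w : List (Fin n)} (hw : IsULW n w) {v : List (Fin n)} (hv : w ~r v)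
    {r₁ r₂ : Fin n → Fin n → Prop}
    (h₁ : IsStrictTotalOrder (Fin n) r₁) (h₂ : IsStrictTotalOrder (Fin n) r₂)
    (hl₁ : IsLyndonWith r₁ v) (hl₂ : IsLyndonWith r₂ v) :
    ∀ x y, r₁ x y ↔ r₂ x y := by
  classical
  have hwlen : w.length = Nat.factorial n := hw.1
  have hwne : w ≠ [] := by
    intro h; rw [h] at hwlen; simp at hwlen
    exact (Nat.factorial_pos n).ne hwlen
  set R : Finset (List (Fin n)) := (Finset.range w.length).image (w.rotate ·) with hR
  have hrotinj := rotate_inj_of_all_lyndon (fun v hv => hw.2 v hv)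
  have hRcard : R.card = Nat.factorial n := by
    rw [hR, Finset.card_image_of_injOn, Finset.card_range, hwlen]
    intro i hi j hj hij
    exact hrotinj i j (Finset.mem_range.mp hi) (Finset.mem_range.mp hj) hij
  have hmemR : ∀ t ∈ R, (w ~r t) ∧ IsLyndon t := by
    intro t ht
    obtain ⟨i, hi, hit⟩ := Finset.mem_image.mp ht
    have hrot : w ~r t := ⟨i, hit⟩
    exact ⟨hrot, hw.2 t (isConjugate_iff_rotated.mpr hrot)⟩
  -- choose an order for each list
  have hex : ∀ t : List (Fin n), ∃ q : Fin n → Fin n → Prop,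
      t ∈ R → IsStrictTotalOrder (Fin n) q ∧ IsLyndonWith q t := by
    intro t
    by_cases ht : t ∈ R
    · obtain ⟨q, hq1, hq2⟩ := (hmemR t ht).2
      exact ⟨q, fun _ => ⟨hq1, hq2⟩⟩
    · exact ⟨r₁, fun h => absurd h ht⟩
  choose pick hpick using hex
  -- the map to permutations
  have hΦdef : ∀ (t : {x // x ∈ R}), IsStrictTotalOrder (Fin n) (pick ↑t) ∧
      IsLyndonWith (pick ↑t) ↑t := fun t => hpick ↑t t.2
  set Φ : {x // x ∈ R} → Equiv.Perm (Fin n) :=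
    fun t => rankPerm (pick ↑t) (hΦdef t).1 with hΦ
  have hΦinj : Function.Injective Φ := by
    intro t₁ t₂ heq
    have hiff : ∀ x y, pick ↑t₁ x y ↔ pick ↑t₂ x y := by
      intro x y
      rw [rankPerm_iff (hΦdef t₁).1, rankPerm_iff (hΦdef t₂).1]
      rw [show rankPerm (pick ↑t₁) (hΦdef t₁).1 = rankPerm (pick ↑t₂) (hΦdef t₂).1 from heq]
    have hly1 : IsLyndonWith (pick ↑t₁) ↑t₁ := (hΦdef t₁).2
    have hly2 : IsLyndonWith (pick ↑t₁) ↑t₂ :=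
      lyndonWith_congr (fun x y => (hiff x y).symm) (hΦdef t₂).2
    have h12 : (↑t₁ : List (Fin n)) ~r ↑t₂ :=
      ((hmemR ↑t₁ t₁.2).1.symm.trans (hmemR ↑t₂ t₂.2).1)
    exact Subtype.ext (lyndon_unique_word (hΦdef t₁).1 h12 hly1 hly2)
  have hcard : Fintype.card {x // x ∈ R} = Fintype.card (Equiv.Perm (Fin n)) := by
    rw [Fintype.card_coe, hRcard, Fintype.card_perm, Fintype.card_fin]
  have hΦbij : Function.Bijective Φ :=
    (Fintype.bijective_iff_injective_and_card Φ).mpr ⟨hΦinj, hcard⟩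
  -- v ∈ R
  have hvR : v ∈ R := by
    obtain ⟨m, hm⟩ := hv
    have hpos : 0 < w.length := List.length_pos_iff.mpr hwne
    refine Finset.mem_image.mpr ⟨m % w.length, Finset.mem_range.mpr (Nat.mod_lt _ hpos), ?_⟩
    rw [List.rotate_mod]; exact hm
  -- apply surjectivity to both rank perms
  have key : ∀ (r : Fin n → Fin n → Prop) (hr : IsStrictTotalOrder (Fin n) r),
      IsLyndonWith r v → Φ ⟨v, hvR⟩ = rankPerm r hr := by
    intro r hr hl
    obtain ⟨t, ht⟩ := hΦbij.2 (rankPerm r hr)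
    have hiff : ∀ x y, pick ↑t x y ↔ r x y := by
      intro x y
      rw [rankPerm_iff (hΦdef t).1, rankPerm_iff hr]
      rw [show rankPerm (pick ↑t) (hΦdef t).1 = rankPerm r hr from ht]
    have hlyt : IsLyndonWith r ↑t := lyndonWith_congr hiff (hΦdef t).2
    have htv : (↑t : List (Fin n)) ~r v := ((hmemR ↑t t.2).1.symm.trans hv)
    have : (↑t : List (Fin n)) = v := lyndon_unique_word hr htv hlyt hl
    have ht2 : t = ⟨v, hvR⟩ := Subtype.ext this
    rw [← ht2, ht]
  have h12 : rankPerm r₁ h₁ = rankPerm r₂ h₂ := by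
    rw [← key r₁ h₁ hl₁, ← key r₂ h₂ hl₂]
  intro x y
  rw [rankPerm_iff h₁, rankPerm_iff h₂, h12]


/-- **Branching lemma**: if two distinct conjugates of a ULW branch after a common
prefix ρ, the branching letter of the second does not occur in ρ. -/
lemma branching {w : List (Fin n)} (hw : IsULW n w) {v T : List (Fin n)}
    (hv : w ~r v) (hT : w ~r T) {ρ s t : List (Fin n)} {a b : Fin n}
    (hvd : v = ρ ++ a :: s) (hTd : T = ρ ++ b :: t) (hab : a ≠ b) :
    b ∉ ρ := by
  intro hbρ
  obtain ⟨ρ₁, ρ₂, hρ⟩ := List.append_of_mem hbρ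
  -- the two inner rotations
  set U₁ : List (Fin n) := (b :: ρ₂ ++ a :: s) ++ ρ₁ with hU₁
  set U₂ : List (Fin n) := (b :: ρ₂ ++ b :: t) ++ ρ₁ with hU₂
  have hv' : v = ρ₁ ++ (b :: ρ₂ ++ a :: s) := by rw [hvd, hρ]; simp
  have hT' : T = ρ₁ ++ (b :: ρ₂ ++ b :: t) := by rw [hTd, hρ]; simp
  have hrotv : v ~r U₁ := by
    refine ⟨ρ₁.length, ?_⟩
    have hle : ρ₁.length ≤ v.length := by rw [hv']; simp
    rw [List.rotate_eq_drop_append_take hle, hv', List.drop_left, List.take_left]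
  have hrotT : T ~r U₂ := by
    refine ⟨ρ₁.length, ?_⟩
    have hle : ρ₁.length ≤ T.length := by rw [hT']; simp
    rw [List.rotate_eq_drop_append_take hle, hT', List.drop_left, List.take_left]
  have hU₁rot : w ~r U₁ := hv.trans hrotv
  have hU₂rot : w ~r U₂ := hT.trans hrotT
  obtain ⟨q₁, hq₁sto, hq₁⟩ := hw.2 U₁ (isConjugate_iff_rotated.mpr hU₁rot)
  -- U₁ ≠ U₂
  have hne : U₁ ≠ U₂ := by
    intro h
    rw [hU₁, hU₂] at h
    have h2 := List.append_cancel_right h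
    have h3 := List.append_cancel_left (by simpa using h2 : (b :: ρ₂) ++ a :: s = (b :: ρ₂) ++ b :: t)
    injection h3 with h4 _
    exact hab h4
  -- U₂ is a rotation of U₁
  obtain ⟨k, hk⟩ : U₁ ~r U₂ := hU₁rot.symm.trans hU₂rot
  have hU₁ne : U₁ ≠ [] := by rw [hU₁]; simp
  have hlex : List.Lex q₁ U₁ U₂ := lyndon_lex_rotate hq₁ hU₁ne hk (Ne.symm hne)
  -- peel the common prefix b :: ρ₂
  have hlex2 : List.Lex q₁ (a :: (s ++ ρ₁)) (b :: (t ++ ρ₁)) := by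
    apply lex_peel (fun x => irrefl_of q₁ x) (b :: ρ₂)
    have e1 : U₁ = (b :: ρ₂) ++ (a :: (s ++ ρ₁)) := by rw [hU₁]; simp
    have e2 : U₂ = (b :: ρ₂) ++ (b :: (t ++ ρ₁)) := by rw [hU₂]; simp
    rw [← e1, ← e2]
    exact hlex
  have hqab : q₁ a b := lex_cons_ne hlex2 hab
  -- head minimality of U₁
  have hU₁head : U₁ = b :: (ρ₂ ++ a :: s ++ ρ₁) := by rw [hU₁]; simp
  have haU₁ : a ∈ b :: (ρ₂ ++ a :: s ++ ρ₁) := by simp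
  have hqba : q₁ b a := by
    apply lyndon_head_min (by rw [← hU₁head]; exact hq₁) haU₁ hab
  exact sto_asymm hq₁sto a b hqab hqba

/-! ### indexOf lemmas -/

lemma indexOf_append_cons_self {α : Type*} [DecidableEq α] {a : α} {p s : List α}
    (ha : a ∉ p) : (p ++ a :: s).idxOf a = p.length := by
  induction p with
  | nil => simp
  | cons x p ih =>
    simp only [List.mem_cons, not_or] at ha
    have hxa : (x == a) = false := beq_eq_false_iff_ne.mpr (fun h => ha.1 h.symm)
    simp only [List.cons_append, List.idxOf_cons, hxa, cond_false, List.length_cons]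
    rw [ih ha.2]

lemma indexOf_ge_of_not_mem_prefix {α : Type*} [DecidableEq α] {x : α} {p l : List α}
    (hx : x ∉ p) : p.length ≤ (p ++ l).idxOf x := by
  induction p with
  | nil => simp
  | cons y p ih =>
    simp only [List.mem_cons, not_or] at hx
    have hyx : (y == x) = false := beq_eq_false_iff_ne.mpr (fun h => hx.1 h.symm)
    simp only [List.cons_append, List.idxOf_cons, hyx, cond_false, List.length_cons]
    have := ih hx.2; omega

lemma indexOf_append_of_mem {α : Type*} [DecidableEq α] {x : α} {p l : List α}
    (hx : x ∈ p) : (p ++ l).idxOf x = p.idxOf x := by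
  induction p with
  | nil => simp at hx
  | cons y p ih =>
    simp only [List.cons_append, List.idxOf_cons]
    by_cases h : x = y
    · simp [h]
    · have hyx : (y == x) = false := beq_eq_false_iff_ne.mpr (fun hh => h hh.symm)
      simp only [hyx, cond_false]
      rw [ih]
      rcases List.mem_cons.mp hx with h' | h'
      · exact absurd h' h
      · exact h'

lemma eq_of_indexOf_append_cons {α : Type*} [DecidableEq α] {x a : α} {p s : List α}
    (h : (p ++ a :: s).idxOf x = p.length) : x = a := by
  induction p with
  | nil =>
    simp only [List.nil_append, List.idxOf_cons, List.length_nil] at h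
    by_cases hxa : x = a
    · exact hxa
    · have hax : (a == x) = false := beq_eq_false_iff_ne.mpr (fun hh => hxa hh.symm)
      rw [hax, cond_false] at h
      simp at h
  | cons y p ih =>
    simp only [List.cons_append, List.idxOf_cons, List.length_cons] at h
    by_cases hxy : x = y
    · rw [show (y == x) = true from beq_iff_eq.mpr hxy.symm, cond_true] at h; simp at h
    · rw [show (y == x) = false from beq_eq_false_iff_ne.mpr (fun hh => hxy hh.symm), cond_false] at h
      exact ih (by omega)


/-- **Main lemma**: the order of a conjugate of a ULW extends its first-occurrence order. -/
lemma order_extends_firstOcc {w : List (Fin n)} (hw : IsULW n w) {v : List (Fin n)}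
    (hv : w ~r v) {r : Fin n → Fin n → Prop} (hr : IsStrictTotalOrder (Fin n) r)
    (hl : IsLyndonWith r v) :
    ∀ i j : Fin n, i ∈ v → v.idxOf i < v.idxOf j → r i j := by
  suffices main : ∀ (k : ℕ) (i j : Fin n), v.idxOf i = k → i ∈ v →
      v.idxOf i < v.idxOf j → r i j by
    intro i j hi hij
    exact main (v.idxOf i) i j rfl hi hij
  intro k
  induction k using Nat.strong_induction_on with
  | _ k IH =>
  intro i j hk hi hij
  have hilen : v.idxOf i < v.length := List.idxOf_lt_length_iff.mpr hi
  by_contra hrij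
  have hji : r j i := by
    have hne : j ≠ i := by intro h; subst h; omega
    rcases trichotomous_of r i j with h | h | h
    · exact absurd h hrij
    · exact absurd h.symm hne
    · exact h
  -- the inductive hypothesis, applied to letters first occurring before i
  have hIH : ∀ y z : Fin n, v.idxOf y < v.idxOf i → v.idxOf y < v.idxOf z → r y z := by
    intro y z h1 h2
    have hy : y ∈ v := List.idxOf_lt_length_iff.mp (by omega)
    exact IH (v.idxOf y) (by omega) y z rfl hy h2
  -- M-structure facts
  have hMdc : ∀ y z : Fin n, v.idxOf y < v.idxOf i → r z y →
      v.idxOf z < v.idxOf i := by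
    intro y z h1 h2
    by_contra h3
    exact sto_asymm hr z y h2 (hIH y z h1 (by omega))
  have hMout : ∀ y z : Fin n, v.idxOf y < v.idxOf i → ¬(v.idxOf z < v.idxOf i) →
      r y z := by
    intro y z h1 h2
    exact hIH y z h1 (by omega)
  -- the surgically modified order: i is moved directly above the letters
  -- first occurring before it
  set q : Fin n → Fin n → Prop := fun y z =>
    if y = i then ¬(v.idxOf z < v.idxOf i) ∧ z ≠ i
    else if z = i then v.idxOf y < v.idxOf i
    else r y z with hq
  have hq_iz : ∀ z, q i z ↔ (¬(v.idxOf z < v.idxOf i) ∧ z ≠ i) := by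
    intro z; simp [hq]
  have hq_yi : ∀ y, y ≠ i → (q y i ↔ v.idxOf y < v.idxOf i) := by
    intro y hy; simp [hq, hy]
  have hq_yz : ∀ y z, y ≠ i → z ≠ i → (q y z ↔ r y z) := by
    intro y z hy hz; simp [hq, hy, hz]
  have hirr_i : v.idxOf i < v.idxOf i → False := by omega
  have hqsto : IsStrictTotalOrder (Fin n) q := by
    refine { trichotomous := ?_, irrefl := ?_, trans := ?_ }
    · intro y z
      refine (fun h h1 h2 => (h.resolve_left h1).resolve_right h2 : (q y z ∨ y = z ∨ q z y) → ¬q y z → ¬q z y → y = z) ?_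
      by_cases hy : y = i
      · subst hy
        by_cases hz : z = y
        · right; left; exact hz.symm
        · by_cases hzi : v.idxOf z < v.idxOf y
          · right; right; exact (hq_yi z hz).mpr hzi
          · left; exact (hq_iz z).mpr ⟨hzi, hz⟩
      · by_cases hz : z = i
        · subst hz
          by_cases hyi : v.idxOf y < v.idxOf z
          · left; exact (hq_yi y hy).mpr hyi
          · right; right; exact (hq_iz y).mpr ⟨hyi, hy⟩
        · rcases trichotomous_of r y z with h | h | h
          · left; exact (hq_yz y z hy hz).mpr h
          · right; left; exact h
          · right; right; exact (hq_yz z y hz hy).mpr h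
    · intro y
      by_cases hy : y = i
      · subst hy; intro h; exact ((hq_iz y).mp h).2 rfl
      · intro h; exact irrefl_of r y ((hq_yz y y hy hy).mp h)
    · intro y z t hyz hzt
      by_cases hy : y = i
      · subst hy
        obtain ⟨h1, h2⟩ := (hq_iz z).mp hyz
        by_cases ht : t = y
        · exfalso; rw [ht] at hzt
          exact h1 ((hq_yi z h2).mp hzt)
        · apply (hq_iz t).mpr
          refine ⟨?_, ht⟩
          intro h3
          exact h1 (hMdc t z h3 ((hq_yz z t h2 ht).mp hzt))
      · by_cases hz : z = i
        · subst hz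
          have h1 := (hq_yi y hy).mp hyz
          obtain ⟨h2, h3⟩ := (hq_iz t).mp hzt
          exact (hq_yz y t hy h3).mpr (hMout y t h1 h2)
        · have h1 := (hq_yz y z hy hz).mp hyz
          by_cases ht : t = i
          · subst ht
            have h2 := (hq_yi z hz).mp hzt
            exact (hq_yi y hy).mpr (hMdc z y h2 h1)
          · exact (hq_yz y t hy ht).mpr (trans_of r h1 ((hq_yz z t hz ht).mp hzt))
  -- v cannot be Lyndon w.r.t. q, since q ≠ r
  have hnly : ¬ IsLyndonWith q v := by
    intro hlq
    have hiff := order_unique hw hv hr hqsto hl hlq i j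
    have hqij : q i j := (hq_iz j).mpr ⟨by omega, fun h => by subst h; omega⟩
    exact hrij (hiff.mpr hqij)
  unfold IsLyndonWith at hnly
  push_neg at hnly
  obtain ⟨v₁, v₂, hsplit, hv₁, hv₂, hnlex⟩ := hnly
  set T := v₂ ++ v₁ with hT
  have hlexrvT : List.Lex r v T := hl v₁ v₂ hsplit hv₁ hv₂
  have hTnev : T ≠ v := by
    intro h
    rw [h] at hlexrvT
    exact lex_irrefl (fun a => irrefl_of r a) v hlexrvT
  have hlen : v.length = T.length := by rw [hT, hsplit]; simp [Nat.add_comm]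
  obtain ⟨p, s, t, a, b, hvd, hTd, hab⟩ := exists_lcp v T hlen hTnev.symm
  -- r a b from Lyndonness of v w.r.t. r
  have hrab : r a b := by
    rw [hvd, hTd] at hlexrvT
    exact lex_cons_ne (lex_peel (fun x => irrefl_of r x) p hlexrvT) hab
  -- q b a from failure of Lyndonness w.r.t. q
  have hqba : q b a := by
    rcases trichotomous_of q a b with h | h | h
    · exfalso; apply hnlex; rw [hvd, hTd] at *; exact lex_append_cons p s t h
    · exact absurd h hab
    · exact h
  -- rotations
  have hTrot : v ~r T := by
    refine ⟨v₁.length, ?_⟩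
    rw [hsplit, List.rotate_eq_drop_append_take (by simp), List.drop_left, List.take_left]
  have hTrotw : w ~r T := hv.trans hTrot
  -- case analysis on the flipped pair
  by_cases hbi : b = i
  · subst hbi
    -- q b a with b = i : a is outside M and ≠ i
    obtain ⟨h1, h2⟩ := (hq_iz a).mp hqba
    -- branching: a ∉ p and b ∉ p
    have hanp : a ∉ p := branching hw hTrotw hv hTd hvd (Ne.symm hab)
    have hbnp : b ∉ p := branching hw hv hTrotw hvd hTd hab
    have hia : v.idxOf a = p.length := by rw [hvd]; exact indexOf_append_cons_self hanp
    have hii : p.length ≤ v.idxOf b := by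
      rw [hvd]; exact indexOf_ge_of_not_mem_prefix hbnp
    have hine : v.idxOf b ≠ p.length := by
      intro h
      rw [hvd] at h
      exact hab (eq_of_indexOf_append_cons h).symm
    -- so idx a < idx i, contradicting h1
    exact h1 (by omega)
  · by_cases hai : a = i
    · subst hai
      have h1 := (hq_yi b hbi).mp hqba
      exact sto_asymm hr a b hrab (hIH b a h1 h1)
    · exact sto_asymm hr a b hrab ((hq_yz b a hbi hai).mp hqba)


/-- every cyclic factor is the prefix of some rotation -/
lemma exists_rotation_with_prefix {α : Type*} {w u : List α}
    (hu : IsCyclicFactor w u) : ∃ T, (w ~r T) ∧ u <+: T := by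
  obtain ⟨⟨s', t', hst⟩, hlen⟩ := hu
  set k := s'.length with hkdef
  have hdrop : (w ++ w).drop k = u ++ t' := by
    rw [← hst, List.append_assoc, List.drop_left]
  have hk2 : k + (u.length + t'.length) = w.length + w.length := by
    have := congrArg List.length hst
    simp at this
    omega
  by_cases hkN : k ≤ w.length
  · refine ⟨w.rotate k, ⟨k, rfl⟩, ?_⟩
    rw [List.prefix_iff_eq_take]
    have h1 : u = ((w ++ w).drop k).take u.length := by
      rw [hdrop, List.take_append]
      simp
    have h2 : (w ++ w).drop k = w.drop k ++ w := by
      rw [List.drop_append]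
      have : k - w.length = 0 := by omega
      rw [this]
      simp
    have h3 : u.length - (w.drop k).length ≤ k := by
      rw [List.length_drop]; omega
    conv_lhs => rw [h1]
    rw [h2, List.rotate_eq_drop_append_take hkN,
        List.take_append, List.take_append,
        List.take_take, min_eq_left h3]
  · push_neg at hkN
    set k' := k - w.length with hk'def
    have hk'N : k' ≤ w.length := by omega
    have hdrop2 : (w ++ w).drop k = w.drop k' := by
      have : k = w.length + k' := by omega
      rw [this, List.drop_length_add_append]
    refine ⟨w.rotate k', ⟨k', rfl⟩, ?_⟩
    have hupre : u <+: w.drop k' := by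
      rw [← hdrop2, hdrop]; exact List.prefix_append u t'
    rw [List.rotate_eq_drop_append_take hk'N]
    exact hupre.trans (List.prefix_append _ _)

theorem stmt_6' (n : ℕ) (w u v : List (Fin n)) (hw : IsULW n w)
    (hu : IsCyclicFactor w u) (hv : IsConjugate w v)
    (r : Fin n → Fin n → Prop) (hr : IsStrictTotalOrder (Fin n) r)
    (hLyndon : IsLyndonWith r v) :
    u <+: v ↔ ∀ i j : Fin n, wordOrder u i j → r i j := by
  have hvrot : w ~r v := isConjugate_iff_rotated.mp hv
  constructor
  · -- prefix ⇒ extension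
    rintro hpre i j ⟨hiu, hij⟩
    obtain ⟨rest, hrest⟩ := hpre
    have hiv : i ∈ v := by rw [← hrest]; exact List.mem_append_left _ hiu
    have hidxi : v.idxOf i = u.idxOf i := by rw [← hrest]; exact indexOf_append_of_mem hiu
    have hidx : v.idxOf i < v.idxOf j := by
      by_cases hju : j ∈ u
      · rw [hidxi, ← hrest, indexOf_append_of_mem hju]; exact hij
      · have h1 : u.length ≤ v.idxOf j := by
          rw [← hrest]; exact indexOf_ge_of_not_mem_prefix hju
        have h2 : u.idxOf i < u.length := List.idxOf_lt_length_iff.mpr hiu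
        omega
    exact order_extends_firstOcc hw hvrot hr hLyndon i j hiv hidx
  · -- extension ⇒ prefix
    intro hext
    by_contra hnp
    obtain ⟨T, hTrot, hTpre⟩ := exists_rotation_with_prefix hu
    have hTnev : T ≠ v := by
      intro h; rw [h] at hTpre; exact hnp hTpre
    have hlen : v.length = T.length := by
      rw [← hvrot.perm.length_eq, ← hTrot.perm.length_eq]
    obtain ⟨p, s, t, a, b, hvd, hTd, hab⟩ := exists_lcp v T hlen (fun h => hTnev h.symm)
    have hppre : p <+: T := ⟨b :: t, hTd.symm⟩
    have hplt : p.length < u.length := by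
      by_contra hge
      apply hnp
      have hup : u <+: p := List.prefix_of_prefix_length_le hTpre hppre (by omega)
      exact hup.trans ⟨a :: s, hvd.symm⟩
    obtain ⟨tr, htr⟩ := hTpre
    have hpu : p <+: u := List.prefix_of_prefix_length_le hppre ⟨tr, htr⟩ hplt.le
    obtain ⟨u₂', hu₂'⟩ := hpu
    obtain ⟨u₂, hu₂⟩ : ∃ u₂, u = p ++ b :: u₂ := by
      cases u₂' with
      | nil =>
        exfalso; rw [← hu₂'] at hplt; simp at hplt
      | cons c u₂ =>
        refine ⟨u₂, ?_⟩
        have h1 : p ++ c :: (u₂ ++ tr) = p ++ b :: t := by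
          rw [← hTd, ← htr, ← hu₂']; simp
        have h2 := List.append_cancel_left h1
        injection h2 with h3 _
        rw [← hu₂', h3]
    -- branching letters not in p
    have hanp : a ∉ p := branching hw hTrot hvrot hTd hvd (Ne.symm hab)
    have hbnp : b ∉ p := branching hw hvrot hTrot hvd hTd hab
    -- wordOrder u b a holds
    have hwo : wordOrder u b a := by
      refine ⟨by rw [hu₂]; simp, ?_⟩
      have h1 : u.idxOf b = p.length := by rw [hu₂]; exact indexOf_append_cons_self hbnp
      have h2 : p.length ≤ u.idxOf a := by rw [hu₂]; exact indexOf_ge_of_not_mem_prefix hanp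
      have h3 : u.idxOf a ≠ p.length := by
        intro h; rw [hu₂] at h; exact hab (eq_of_indexOf_append_cons h)
      omega
    have hrba : r b a := hext b a hwo
    -- but r a b from v's Lyndonness
    obtain ⟨k, hk⟩ : v ~r T := hvrot.symm.trans hTrot
    have hvne : v ≠ [] := by
      intro h
      rw [h] at hvd; simp at hvd
    have hlex : List.Lex r v T := lyndon_lex_rotate hLyndon hvne hk hTnev
    have hrab : r a b := by
      rw [hvd, hTd] at hlex
      exact lex_cons_ne (lex_peel (fun x => irrefl_of r x) p hlex) hab
    exact sto_asymm hr a b hrab hrba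


end ULW6

/-- Proposition: let `w` be a ULW, `u` a cyclic factor of `w`, and `v` a conjugate of `w`
that is Lyndon with respect to the total order `r`. Then `u` is a prefix of `v` iff `r`
extends the partial order `⊲_u` defined by `u`. -/
theorem stmt_6 (n : ℕ) (w u v : List (Fin n)) (hw : IsULW n w)
    (hu : IsCyclicFactor w u) (hv : IsConjugate w v)
    (r : Fin n → Fin n → Prop) (hr : IsStrictTotalOrder (Fin n) r)
    (hLyndon : IsLyndonWith r v) :
    u <+: v ↔ ∀ i j : Fin n, wordOrder u i j → r i j := by
  exact ULW6.stmt_6' n w u v hw hu hv r hr hLyndon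
end

section
/- Let w be a universal Lyndon word of degree n and let u be a cyclic factor of w of length k > 0. Then for every total order < on Σ_n that extends the partial order ⊲_u defined by u, the word u is lexicographically (with respect to <) smaller than or equal to every cyclic factor of w of length k. -/
section Aux
variable {α : Type*}

/-- A prefix of equal-or-shorter length of an append is a prefix of the first part. -/
lemma aux_prefix_of_append {u A B : List α} (h : u <+: A ++ B) (hl : u.length ≤ A.length) :
    u <+: A := by
  rw [List.prefix_iff_eq_take] at h ⊢
  rw [List.take_append, Nat.sub_eq_zero_of_le hl, List.take_zero,
    List.append_nil] at h
  exact h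

/-- A cyclic factor is a prefix of some rotation. -/
lemma aux_cyclic_prefix_rotate {w u : List α} (h : IsCyclicFactor w u) :
    ∃ m, u <+: w.rotate m := by
  obtain ⟨⟨s, t, hst⟩, hlen⟩ := h
  have hlen2 : s.length + (u.length + t.length) = w.length + w.length := by
    have := congrArg List.length hst; simpa using this
  have hdrop : u ++ t = (w ++ w).drop s.length := by
    rw [← hst, List.append_assoc, List.drop_left]
  by_cases hs : s.length ≤ w.length
  · refine ⟨s.length, ?_⟩
    have h1 : (w ++ w).drop s.length = w.rotate s.length ++ w.drop s.length := by
      rw [List.drop_append, Nat.sub_eq_zero_of_le hs, List.drop_zero,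
        List.rotate_eq_drop_append_take hs, List.append_assoc]
      congr 1
      exact (List.take_append_drop _ _).symm
    have h2 : u <+: w.rotate s.length ++ w.drop s.length := by
      rw [← h1, ← hdrop]; exact ⟨t, rfl⟩
    exact aux_prefix_of_append h2 (by rw [List.length_rotate]; exact hlen)
  · push_neg at hs
    refine ⟨s.length - w.length, ?_⟩
    have h1 : (w ++ w).drop s.length = w.drop (s.length - w.length) := by
      rw [List.drop_append, List.drop_eq_nil_of_le (le_of_lt hs),
        List.nil_append]
    have h2 : u <+: w.drop (s.length - w.length) := by
      rw [← h1, ← hdrop]; exact ⟨t, rfl⟩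
    have h3 : w.drop (s.length - w.length) <+:
        w.rotate (s.length - w.length) := by
      rw [List.rotate_eq_drop_append_take (by omega)]
      exact ⟨_, rfl⟩
    exact h2.trans h3

/-- Any rotation is a conjugate. -/
lemma aux_rotate_conj {w : List α} (hw : w ≠ []) (m : ℕ) : IsConjugate w (w.rotate m) := by
  have hlen : 0 < w.length := List.length_pos_iff.mpr hw
  refine ⟨w.take (m % w.length), w.drop (m % w.length), (List.take_append_drop _ _).symm, ?_⟩
  rw [← List.rotate_mod, List.rotate_eq_drop_append_take (le_of_lt (Nat.mod_lt _ hlen))]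

lemma aux_rotate_add_length (l : List α) (x : ℕ) : l.rotate (x + l.length) = l.rotate x := by
  rw [← List.rotate_rotate, ← List.length_rotate l x, List.rotate_length]

lemma aux_rotate_add_mul (l : List α) (x k : ℕ) : l.rotate (x + l.length * k) = l.rotate x := by
  induction k with
  | zero => simp
  | succ k ih =>
    rw [Nat.mul_succ, ← Nat.add_assoc, aux_rotate_add_length, ih]

/-- A rotation of `l` is a rotation of any other rotation of `l`, with bounded offset. -/
lemma aux_rot_rot {l : List α} (hl : l ≠ []) (a b : ℕ) :
    ∃ t, t < l.length ∧ l.rotate b = (l.rotate a).rotate t := by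
  have hlen : 0 < l.length := List.length_pos_iff.mpr hl
  refine ⟨(b + (l.length - a % l.length)) % l.length, Nat.mod_lt _ hlen, ?_⟩
  conv_rhs => rw [← List.length_rotate l a]
  rw [List.rotate_mod, List.length_rotate, List.rotate_rotate]
  have heq : a + (b + (l.length - a % l.length)) = b + l.length * (a / l.length + 1) := by
    have h3 : l.length * (a / l.length) + a % l.length = a := Nat.div_add_mod a l.length
    have h2 : a % l.length < l.length := Nat.mod_lt _ hlen
    have h4 : l.length * (a / l.length + 1) = l.length * (a / l.length) + l.length := by ring
    omega
  rw [heq, aux_rotate_add_mul]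

end Aux

section AuxEq
variable {α : Type*} [DecidableEq α]

lemma aux_indexOf_le (p : List α) (c : α) (u' : List α) :
    (p ++ c :: u').idxOf c ≤ p.length := by
  induction p with
  | nil => simp
  | cons e p ih =>
    by_cases he : e = c
    · subst he; simp
    · rw [List.cons_append, List.idxOf_cons_ne _ he]
      simpa using Nat.succ_le_succ ih

lemma aux_indexOf_gt (p : List α) {c d : α} (u' : List α) (hdp : d ∉ p) (hdc : d ≠ c) :
    p.length < (p ++ c :: u').idxOf d := by
  rw [List.idxOf_append_of_notMem hdp, List.idxOf_cons_ne _ (Ne.symm hdc)]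
  omega

end AuxEq

section AuxLex
variable {α : Type*} {r : α → α → Prop}

lemma aux_lex_append (h : r a b) : ∀ (p : List α) (l1 l2 : List α),
    List.Lex r (p ++ a :: l1) (p ++ b :: l2) := by
  intro p l1 l2
  induction p with
  | nil => exact List.Lex.rel h
  | cons e p ih => exact List.Lex.cons ih

lemma aux_lex_head (hirr : ∀ a, ¬ r a a) {a b : α} (hab : a ≠ b) :
    ∀ (p : List α) (l1 l2 : List α),
    List.Lex r (p ++ a :: l1) (p ++ b :: l2) → r a b := by
  intro p
  induction p with
  | nil =>
    intro l1 l2 h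
    cases h with
    | rel h => exact h
    | cons h => exact absurd rfl hab
  | cons e p ih =>
    intro l1 l2 h
    cases h with
    | rel h => exact absurd h (hirr e)
    | cons h => exact ih _ _ h

lemma aux_lex_cons_ne (hab : a ≠ b) {l1 l2 : List α}
    (h : List.Lex r (a :: l1) (b :: l2)) : r a b := by
  cases h with
  | rel h => exact h
  | cons h => exact absurd rfl hab

lemma aux_exists_diff : ∀ (u v : List α), u.length = v.length → u ≠ v →
    ∃ (p : List α) (a b : α) (u' v' : List α),
      u = p ++ a :: u' ∧ v = p ++ b :: v' ∧ a ≠ b := by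
  intro u
  induction u with
  | nil => intro v hl hne; simp at hl; exact absurd hl.symm (by simpa using hne)
  | cons a u' ih =>
    intro v hl hne
    cases v with
    | nil => simp at hl
    | cons b v' =>
      by_cases hab : a = b
      · subst hab
        have hne' : u' ≠ v' := by intro h; exact hne (by rw [h])
        obtain ⟨p, x, y, u'', v'', h1, h2, h3⟩ := ih v' (by simpa using hl) hne'
        exact ⟨a :: p, x, y, u'', v'', by simp [h1], by simp [h2], h3⟩
      · exact ⟨[], a, b, u', v', rfl, rfl, hab⟩

end AuxLex


/-- Corollary: let `w` be a ULW and `u` a nonempty cyclic factor of `w` of length `k`.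
Then for every total order `r` on `Σ_n` extending `⊲_u`, the word `u` is lexicographically
(w.r.t. `r`) smaller than or equal to every cyclic factor of `w` of length `k`. -/
theorem stmt_7 (n : ℕ) (w u : List (Fin n)) (hw : IsULW n w)
    (hu : IsCyclicFactor w u) (hne : u ≠ [])
    (r : Fin n → Fin n → Prop) (hr : IsStrictTotalOrder (Fin n) r)
    (hext : ∀ i j : Fin n, wordOrder u i j → r i j) :
    ∀ v : List (Fin n), IsCyclicFactor w v → v.length = u.length →
      u = v ∨ List.Lex r u v := by
  intro v hv hlen
  by_cases huv : u = v
  · exact Or.inl huv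
  right
  -- decompose at first difference
  obtain ⟨p, c, d, u', v', hup, hvp, hcd⟩ := aux_exists_diff u v hlen.symm huv
  -- rotations of w extending u and v
  obtain ⟨mx, hxp⟩ := aux_cyclic_prefix_rotate hu
  obtain ⟨my, hyp⟩ := aux_cyclic_prefix_rotate hv
  have hwne : w ≠ [] := by
    intro h
    apply hne
    have := hu.2
    rw [h] at this
    simpa using List.length_eq_zero_iff.mp (Nat.le_zero.mp this)
  have hNpos : 0 < w.length := List.length_pos_iff.mpr hwne
  -- key claim : d ∉ p
  have hdp : d ∉ p := by
    intro hdmem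
    obtain ⟨j, hj, hpj⟩ := List.getElem_of_mem hdmem
    obtain ⟨xr, hxr⟩ := hxp
    obtain ⟨yr, hyr⟩ := hyp
    set X : List (Fin n) := u' ++ xr with hX
    set Y : List (Fin n) := v' ++ yr with hY
    have hxform : w.rotate mx = p ++ c :: X := by
      rw [← hxr, hup]; simp [hX]
    have hyform : w.rotate my = p ++ d :: Y := by
      rw [← hyr, hvp]; simp [hY]
    -- lengths
    have hulen : u.length = p.length + 1 + u'.length := by rw [hup]; simp; omega
    have hpw : p.length < w.length := by
      have := hu.2; omega
    have hjw : j ≤ w.length := by omega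
    -- rotated words
    set q : List (Fin n) := p.drop (j+1) with hq
    have hdropj : p.drop j = d :: q := by
      rw [List.drop_eq_getElem_cons hj, hpj, hq]
    set xdag : List (Fin n) := w.rotate (mx + j) with hxdag
    set ydag : List (Fin n) := w.rotate (my + j) with hydag
    have hxd : xdag = (d :: q) ++ c :: (X ++ p.take j) := by
      rw [hxdag, ← List.rotate_rotate, hxform,
        List.rotate_eq_drop_append_take (by rw [List.length_append]; omega),
        List.drop_append, List.take_append,
        Nat.sub_eq_zero_of_le (le_of_lt hj), List.drop_zero, List.take_zero,
        List.append_nil, hdropj]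
      simp [List.append_assoc]
    have hyd : ydag = (d :: q) ++ d :: (Y ++ p.take j) := by
      rw [hydag, ← List.rotate_rotate, hyform,
        List.rotate_eq_drop_append_take (by rw [List.length_append]; omega),
        List.drop_append, List.take_append,
        Nat.sub_eq_zero_of_le (le_of_lt hj), List.drop_zero, List.take_zero,
        List.append_nil, hdropj]
      simp [List.append_assoc]
    -- xdag is Lyndon
    obtain ⟨s, hs, hL⟩ := hw.2 xdag (aux_rotate_conj hwne _)
    have hxlen : xdag.length = w.length := by rw [hxdag, List.length_rotate]
    -- comparison 1 : xdag vs ydag gives s c d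
    obtain ⟨t, htN, hrot⟩ := aux_rot_rot hwne (mx + j) (my + j)
    rw [← hxdag, ← hydag] at hrot
    have htne : t ≠ 0 := by
      intro h
      rw [h, List.rotate_zero] at hrot
      rw [hxd, hyd] at hrot
      have := List.append_cancel_left hrot.symm
      exact hcd (by injection this)
    have hscd : s c d := by
      have hsplit : xdag = xdag.take t ++ xdag.drop t := (List.take_append_drop _ _).symm
      have h1 : xdag.take t ≠ [] := by
        have hlt : (xdag.take t).length = t := by
          rw [List.length_take, hxlen]; omega
        intro h
        rw [h] at hlt
        simp at hlt
        omega
      have h2 : xdag.drop t ≠ [] := by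
        have hlt : (xdag.drop t).length = w.length - t := by
          rw [List.length_drop, hxlen]
        intro h
        rw [h] at hlt
        simp at hlt
        omega
      have hlex := hL _ _ hsplit h1 h2
      rw [← List.rotate_eq_drop_append_take (by rw [hxlen]; omega), ← hrot] at hlex
      rw [hxd, hyd] at hlex
      exact aux_lex_head (fun a => hs.toIrrefl.irrefl a) hcd _ _ _ hlex
    -- comparison 2 : xdag vs its rotation at position (d::q).length gives s d c
    have hsdc : s d c := by
      have hlex := hL (d :: q) (c :: (X ++ p.take j)) hxd (by simp) (by simp)
      rw [hxd] at hlex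
      have hlex' : List.Lex s (d :: (q ++ c :: (X ++ p.take j)))
          (c :: ((X ++ p.take j) ++ d :: q)) := by
        simpa using hlex
      exact aux_lex_cons_ne (Ne.symm hcd) hlex'
    have := hs.toIsTrans.trans _ _ _ hscd hsdc
    exact hs.toIrrefl.irrefl c this
  -- now indexOf c < indexOf d in u
  have hwo : wordOrder u c d := by
    constructor
    · rw [hup]; simp
    · rw [hup]
      exact lt_of_le_of_lt (aux_indexOf_le p c u') (aux_indexOf_gt p u' hdp (Ne.symm hcd))
  have hrcd := hext c d hwo
  rw [hup, hvp]
  exact aux_lex_append hrcd p u' v'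
end

section
/- In a universal Lyndon word of degree n, every letter a ∈ Σ_n occurs exactly (n−1)! times. -/
section Aux

variable {α : Type*}

lemma lex_head {r : α → α → Prop} {x y : α} {s t : List α}
    (h : List.Lex r (x :: s) (y :: t)) (hxy : x ≠ y) : r x y := by
  cases h with
  | cons h => exact absurd rfl hxy
  | rel h => exact h

lemma lex_mono {r r' : α → α → Prop} {s t : List α} (h : List.Lex r s t)
    (hagree : ∀ x ∈ s, ∀ y ∈ t, r x y → r' x y) : List.Lex r' s t := by
  induction h with
  | nil => exact .nil
  | @cons a s t h ih =>
      exact .cons (ih fun x hx y hy hr =>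
        hagree x (List.mem_cons_of_mem _ hx) y (List.mem_cons_of_mem _ hy) hr)
  | @rel a s b t h =>
      exact .rel (hagree a List.mem_cons_self b List.mem_cons_self h)

lemma count_eq_card_filter_get [DecidableEq α] (w : List α) (a : α) :
    w.count a = (Finset.univ.filter fun i : Fin w.length => w.get i = a).card := by
  induction w with
  | nil => simp
  | cons b t ih =>
      rw [List.count_cons, ih, Finset.card_filter, Finset.card_filter]
      simp only [List.length_cons]
      rw [Fin.sum_univ_succ]
      simp [add_comm]
      split_ifs <;> simp_all

lemma proper_conj (w : List α) {i j : ℕ} (hi : i < w.length) (hj : j < w.length) (hij : i ≠ j) :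
    ∃ u₁ u₂ : List α, u₁ ≠ [] ∧ u₂ ≠ [] ∧ w.rotate i = u₁ ++ u₂ ∧ w.rotate j = u₂ ++ u₁ := by
  set len := w.length with hlen
  set k := (len + j - i) % len with hk
  clear_value len
  have hlen0 : 0 < len := lt_of_le_of_lt (Nat.zero_le _) hi
  have hmain : 0 < k ∧ k < len ∧ (i + k) % len = j := by
    rcases hij.lt_or_gt with h | h
    · have hkv : k = j - i := by
        rw [hk]
        have h1 : len + j - i = len + (j - i) := by omega
        rw [h1, Nat.add_mod_left, Nat.mod_eq_of_lt (by omega)]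
      refine ⟨by omega, by omega, ?_⟩
      have h2 : i + k = j := by omega
      rw [h2, Nat.mod_eq_of_lt hj]
    · have hkv : k = len - (i - j) := by
        rw [hk]
        have h1 : len + j - i = len - (i - j) := by omega
        rw [h1, Nat.mod_eq_of_lt (by omega)]
      refine ⟨by omega, by omega, ?_⟩
      have h2 : i + k = len + j := by omega
      rw [h2, Nat.add_mod_left, Nat.mod_eq_of_lt hj]
  obtain ⟨hk0, hk1, hmod⟩ := hmain
  have hlr : (w.rotate i).length = len := by rw [List.length_rotate, ← hlen]
  refine ⟨(w.rotate i).take k, (w.rotate i).drop k, ?_, ?_, (List.take_append_drop k _).symm, ?_⟩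
  · have : 0 < ((w.rotate i).take k).length := by
      rw [List.length_take, hlr]; omega
    exact List.ne_nil_of_length_pos this
  · have : 0 < ((w.rotate i).drop k).length := by
      rw [List.length_drop, hlr]; omega
    exact List.ne_nil_of_length_pos this
  · have hrr : w.rotate j = (w.rotate i).rotate k := by
      rw [List.rotate_rotate, ← List.rotate_mod w (i + k), ← hlen, hmod]
    rw [hrr, List.rotate_eq_drop_append_take (by rw [hlr]; omega)]

lemma exists_equiv_of_sto [Fintype α] {m : ℕ}
    (hcard : Fintype.card α = m) (r : α → α → Prop) (h : IsStrictTotalOrder α r) :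
    ∃ e : Fin m ≃ α, ∀ i j : Fin m, i < j ↔ r (e i) (e j) := by
  letI := h
  letI : DecidableRel r := Classical.decRel r
  letI L : LinearOrder α := linearOrderOfSTO r
  exact ⟨(monoEquivOfFin α hcard).toEquiv,
    fun i j => ((monoEquivOfFin α hcard).lt_iff_lt).symm⟩

end Aux

lemma card_perm_fix (m : ℕ) (a : Fin (m + 1)) :
    Fintype.card {σ : Equiv.Perm (Fin (m + 1)) // σ 0 = a} = Nat.factorial m := by
  have e1 : {σ : Equiv.Perm (Fin (m + 1)) // σ 0 = a} ≃
      {p : Fin (m + 1) × Equiv.Perm (Fin m) // p.1 = a} :=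
    (Equiv.subtypeEquiv Equiv.Perm.decomposeFin (fun σ => by
      rcases hd : Equiv.Perm.decomposeFin σ with ⟨p, e⟩
      have : σ = Equiv.Perm.decomposeFin.symm (p, e) := by
        rw [← hd, Equiv.symm_apply_apply]
      rw [this, Equiv.Perm.decomposeFin_symm_apply_zero]))
  have e2 : {p : Fin (m + 1) × Equiv.Perm (Fin m) // p.1 = a} ≃ Equiv.Perm (Fin m) :=
    { toFun := fun p => p.1.2
      invFun := fun e => ⟨(a, e), rfl⟩
      left_inv := by rintro ⟨⟨p, e⟩, rfl⟩; rfl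
      right_inv := fun e => rfl }
  rw [Fintype.card_congr (e1.trans e2), Fintype.card_perm, Fintype.card_fin]


lemma key_perm {m : ℕ} (w : List (Fin (m + 1))) (hw : IsULW (m + 1) w) (a : Fin (m + 1))
    (i : Fin w.length) (hget : w.get i = a) :
    ∃ π : Equiv.Perm (Fin (m + 1)), π 0 = a ∧
      ∃ r : Fin (m + 1) → Fin (m + 1) → Prop, IsStrictTotalOrder _ r ∧
        IsLyndonWith r (w.rotate ↑i) ∧ ∀ x y, r x y ↔ π.symm x < π.symm y := by
  have hiw : (i : ℕ) < w.length := i.isLt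
  have hconj : IsConjugate w (w.rotate ↑i) :=
    ⟨w.take ↑i, w.drop ↑i, (List.take_append_drop _ _).symm,
      List.rotate_eq_drop_append_take hiw.le⟩
  obtain ⟨r, hSTO, hLyn⟩ := hw.2 _ hconj
  have hv : w.rotate ↑i = a :: (w.drop (↑i + 1) ++ w.take ↑i) := by
    subst hget
    rw [List.rotate_eq_drop_append_take hiw.le, List.drop_eq_getElem_cons hiw,
      List.cons_append, List.get_eq_getElem]
  have hmin : ∀ b, b ≠ a → b ∈ w.rotate ↑i → r a b := by
    intro b hb hbv
    rw [hv] at hbv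
    have hbs : b ∈ w.drop (↑i + 1) ++ w.take ↑i := by
      rcases List.mem_cons.mp hbv with h | h
      · exact absurd h hb
      · exact h
    obtain ⟨p, q, hpq⟩ := List.append_of_mem hbs
    have hsplit : w.rotate ↑i = (a :: p) ++ (b :: q) := by rw [hv, hpq]; simp
    have hlex := hLyn (a :: p) (b :: q) hsplit (List.cons_ne_nil _ _) (List.cons_ne_nil _ _)
    rw [hsplit] at hlex
    have hlex' : List.Lex r (a :: (p ++ (b :: q))) (b :: (q ++ (a :: p))) := by
      simpa using hlex
    exact lex_head hlex' (Ne.symm hb)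
  set r' : Fin (m + 1) → Fin (m + 1) → Prop :=
    fun x y => (x = a ∧ y ≠ a) ∨ (x ≠ a ∧ y ≠ a ∧ r x y) with hr'
  haveI hSTO' : IsStrictTotalOrder (Fin (m + 1)) r' := by
    haveI := hSTO
    haveI hirr : IsIrrefl (Fin (m + 1)) r' := by
      constructor
      intro x h
      rcases h with ⟨h1, h2⟩ | ⟨h1, h2, h3⟩
      · exact h2 h1
      · exact irrefl_of r x h3
    haveI htrans : IsTrans (Fin (m + 1)) r' := by
      constructor
      intro x y z hxy hyz
      rcases hxy with ⟨hx, hy⟩ | ⟨hx, hy, hxy⟩ <;>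
        rcases hyz with ⟨hy', hz⟩ | ⟨hy', hz, hyz⟩
      · exact absurd hy' hy
      · exact Or.inl ⟨hx, hz⟩
      · exact absurd hy' hy
      · exact Or.inr ⟨hx, hz, trans_of r hxy hyz⟩
    haveI htri : IsTrichotomous (Fin (m + 1)) r' := by
      constructor
      intro x y hxy hyx
      by_cases hx : x = a
      · by_cases hy : y = a
        · exact hx.trans hy.symm
        · exact (hxy (Or.inl ⟨hx, hy⟩)).elim
      · by_cases hy : y = a
        · exact (hyx (Or.inl ⟨hy, hx⟩)).elim
        · rcases trichotomous_of r x y with h | h | h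
          · exact (hxy (Or.inr ⟨hx, hy, h⟩)).elim
          · exact h
          · exact (hyx (Or.inr ⟨hy, hx, h⟩)).elim
    haveI hso : IsStrictOrder (Fin (m + 1)) r' := ⟨⟩
    exact ⟨⟩
  have hLyn' : IsLyndonWith r' (w.rotate ↑i) := by
    intro w₁ w₂ hsplit h1 h2
    refine lex_mono (hLyn w₁ w₂ hsplit h1 h2) ?_
    intro x hx y hy hrxy
    have hyv : y ∈ w.rotate ↑i := by
      rw [hsplit, List.mem_append]
      exact (List.mem_append.mp hy).symm
    have hxv : x ∈ w.rotate ↑i := hx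
    have hyne : y ≠ a := by
      intro hya
      rw [hya] at hrxy
      by_cases hxa : x = a
      · rw [hxa] at hrxy; exact irrefl_of r a hrxy
      · haveI := hSTO
        exact asymm_of r (hmin x hxa hxv) hrxy
    by_cases hxa : x = a
    · exact Or.inl ⟨hxa, hyne⟩
    · exact Or.inr ⟨hxa, hyne, hrxy⟩
  obtain ⟨e, he⟩ := exists_equiv_of_sto (Fintype.card_fin (m + 1)) r' hSTO'
  have he0 : e 0 = a := by
    by_contra h
    have h1 : r' a (e 0) := Or.inl ⟨rfl, fun hh => h hh⟩
    have hj0 : e.symm a ≠ 0 := by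
      intro hh
      apply h
      rw [← hh, Equiv.apply_symm_apply]
    have h2 : r' (e 0) a := by
      have := (he 0 (e.symm a)).mp (Fin.pos_of_ne_zero hj0)
      rwa [Equiv.apply_symm_apply] at this
    exact (asymm_of r') h1 h2
  refine ⟨e, he0, r', hSTO', hLyn', fun x y => ?_⟩
  have := he (e.symm x) (e.symm y)
  rw [Equiv.apply_symm_apply, Equiv.apply_symm_apply] at this
  exact this.symm

/-- In a universal Lyndon word of degree `n`, every letter occurs exactly `(n-1)!` times. -/
theorem stmt_10 (n : ℕ) (w : List (Fin n)) (hw : IsULW n w) :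
    ∀ a : Fin n, w.count a = Nat.factorial (n - 1) := by
  classical
  rcases n with _ | m
  · intro a; exact a.elim0
  intro a
  simp only [Nat.add_sub_cancel]
  have hlen : w.length = Nat.factorial (m + 1) := hw.1
  have hle : ∀ b : Fin (m + 1), w.count b ≤ Nat.factorial m := by
    intro b
    rw [count_eq_card_filter_get w b]
    have h := fun (i : Fin w.length) (h : w.get i = b) => key_perm w hw b i h
    choose π hπ0 r hr1 hr2 hr3 using h
    have hcardT : (Finset.univ.filter fun σ : Equiv.Perm (Fin (m + 1)) => σ 0 = b).card =
        Nat.factorial m := by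
      rw [← Fintype.card_subtype]
      exact card_perm_fix m b
    rw [← hcardT]
    refine Finset.card_le_card_of_injOn
      (fun i => if h : w.get i = b then π i h else 1) ?_ ?_
    · intro i hi
      have hib : w.get i = b := (Finset.mem_filter.mp hi).2
      rw [Finset.mem_coe, Finset.mem_filter]
      exact ⟨Finset.mem_univ _, by simp only [dif_pos hib]; exact hπ0 i hib⟩
    · intro i hi j hj hfij
      by_contra hij
      have hgi : w.get i = b := (Finset.mem_filter.mp (Finset.mem_coe.mp hi)).2
      have hgj : w.get j = b := (Finset.mem_filter.mp (Finset.mem_coe.mp hj)).2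
      simp only [dif_pos hgi, dif_pos hgj] at hfij
      have hne : (i : ℕ) ≠ (j : ℕ) := fun h => hij (Fin.ext h)
      obtain ⟨u₁, u₂, hu1, hu2, h3, h4⟩ := proper_conj w i.isLt j.isLt hne
      have lex1 : List.Lex (r i hgi) (w.rotate ↑i) (w.rotate ↑j) := by
        have := hr2 i hgi u₁ u₂ h3 hu1 hu2
        rwa [← h4] at this
      obtain ⟨u₁', u₂', hu1', hu2', h3', h4'⟩ := proper_conj w j.isLt i.isLt (Ne.symm hne)
      have lex2 : List.Lex (r j hgj) (w.rotate ↑j) (w.rotate ↑i) := by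
        have := hr2 j hgj u₁' u₂' h3' hu1' hu2'
        rwa [← h4'] at this
      have lex2' : List.Lex (r i hgi) (w.rotate ↑j) (w.rotate ↑i) :=
        lex_mono lex2 (fun x _ y _ hr =>
          (hr3 i hgi x y).mpr (by rw [hfij]; exact (hr3 j hgj x y).mp hr))
      haveI : IsAsymm (Fin (m + 1)) (r i hgi) := ⟨fun x y h1 h2 =>
        absurd ((hr3 i hgi x y).mp h1) (asymm ((hr3 i hgi y x).mp h2))⟩
      exact asymm_of (List.Lex (r i hgi)) lex1 lex2'
  have hsum : ∑ b : Fin (m + 1), w.count b = w.length := by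
    have := Multiset.sum_count_eq_card (s := (Finset.univ : Finset (Fin (m + 1))))
      (m := (w : Multiset (Fin (m + 1)))) (fun x _ => Finset.mem_univ x)
    simpa using this
  by_contra hnea
  have hlt : w.count a < Nat.factorial m := lt_of_le_of_ne (hle a) hnea
  have hsl : ∑ b : Fin (m + 1), w.count b < ∑ _b : Fin (m + 1), Nat.factorial m :=
    Finset.sum_lt_sum (fun b _ => hle b) ⟨a, Finset.mem_univ a, hlt⟩
  rw [hsum, hlen, Finset.sum_const, Finset.card_univ, Fintype.card_fin, smul_eq_mul,
    Nat.factorial_succ] at hsl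
  exact lt_irrefl _ hsl
end

section
/- If X is a lex-code of degree n containing a word of length greater than n!, then X is not Hamiltonian. -/
/-- `x` is the lexicographic minimum of `X` with respect to the letter order `r`. -/
def IsLexMinOf {n : ℕ} (r : Fin n → Fin n → Prop) (x : List (Fin n))
    (X : Set (List (Fin n))) : Prop :=
  x ∈ X ∧ ∀ y ∈ X, y ≠ x → List.Lex r x y

/-- A lex-code of degree `n` : a set of nonempty words over `Σ_n` such that (1) every
`x ∈ X` is the lexicographic minimum of `X` for exactly one total order on `Σ_n`, and
(2) every proper prefix of a word of `X` is a prefix of at least two distinct words of `X`. -/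
def IsLexCode (n : ℕ) (X : Set (List (Fin n))) : Prop :=
  (∀ x ∈ X, x ≠ []) ∧
  (∀ x ∈ X, ∃ r : Fin n → Fin n → Prop, IsStrictTotalOrder (Fin n) r ∧ IsLexMinOf r x X ∧
    ∀ r' : Fin n → Fin n → Prop, IsStrictTotalOrder (Fin n) r' → IsLexMinOf r' x X → r' = r) ∧
  (∀ x ∈ X, ∀ p : List (Fin n), p <+: x → p ≠ [] → p ≠ x →
    ∃ y ∈ X, ∃ z ∈ X, y ≠ z ∧ p <+: y ∧ p <+: z)

/-- The edge relation `S_X` : `(x, y)` is an edge iff `x` is a prefix of `ay`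
for some letter `a`. -/
def SX {n : ℕ} (X : Set (List (Fin n))) (x y : List (Fin n)) : Prop :=
  x ∈ X ∧ y ∈ X ∧ ∃ a : Fin n, x <+: a :: y

/-- The digraph of `S_X` on vertex set `X` has a Hamiltonian cycle: a cyclic sequence of
pairwise distinct vertices containing every element of `X`, in which every
(cyclically) consecutive pair is an edge of `S_X`. -/
def HasHamiltonianCycle {n : ℕ} (X : Set (List (Fin n))) : Prop :=
  ∃ c : List (List (Fin n)), c ≠ [] ∧ c.Nodup ∧ (∀ x, x ∈ c ↔ x ∈ X) ∧
    ∀ p ∈ c.zip (c.rotate 1), SX X p.1 p.2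

/-- A Hamiltonian lex-code. -/
def IsHamiltonianLexCode (n : ℕ) (X : Set (List (Fin n))) : Prop :=
  IsLexCode n X ∧ HasHamiltonianCycle X

/- ------------------ auxiliary lemmas ------------------ -/

private lemma aux_lex_of_prefix {α : Type*} {r : α → α → Prop} :
    ∀ {p q : List α}, p <+: q → p ≠ q → List.Lex r p q := by
  intro p
  induction p with
  | nil =>
    intro q _ hne
    cases q with
    | nil => exact absurd rfl hne
    | cons b t => exact List.Lex.nil
  | cons a p ih =>
    intro q hpre hne
    cases q with
    | nil => simp at hpre
    | cons b t =>
      rw [List.cons_prefix_cons] at hpre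
      obtain ⟨rfl, h⟩ := hpre
      exact List.Lex.cons (ih h (by rintro rfl; exact hne rfl))

private lemma aux_lex_asymm {α : Type*} {r : α → α → Prop}
    (hr : ∀ a b, r a b → r b a → False) (hirr : ∀ a, ¬ r a a) :
    ∀ {u v : List α}, List.Lex r u v → List.Lex r v u → False := by
  intro u v h1
  induction h1 with
  | nil => intro h2; cases h2
  | @cons a l l' h ih =>
    intro h2
    cases h2 with
    | cons h' => exact ih h'
    | rel h' => exact hirr a h'
  | @rel a l b l' hab =>
    intro h2
    cases h2 with
    | cons h' => exact hirr _ hab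
    | rel h' => exact hr _ _ hab h'

open Classical in
private noncomputable def auxRank {n : ℕ} (r : Fin n → Fin n → Prop) (i : Fin n) : ℕ :=
  (Finset.univ.filter fun j => r j i).card

open Classical in
private lemma auxRank_lt_iff {n : ℕ} {r : Fin n → Fin n → Prop}
    (hsto : IsStrictTotalOrder (Fin n) r) {i j : Fin n} :
    r i j ↔ auxRank r i < auxRank r j := by
  have htr : ∀ a b c, r a b → r b c → r a c := fun a b c => hsto.trans a b c
  have hirr : ∀ a, ¬ r a a := fun a => hsto.irrefl a
  have fwd : ∀ {i j : Fin n}, r i j → auxRank r i < auxRank r j := by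
    intro i j hij
    apply Finset.card_lt_card
    constructor
    · intro k hk
      simp only [Finset.mem_filter, Finset.mem_univ, true_and] at hk ⊢
      exact htr _ _ _ hk hij
    · intro hsub
      have hi : i ∈ Finset.univ.filter fun k => r k j := by simp [hij]
      have := hsub hi
      simp only [Finset.mem_filter, Finset.mem_univ, true_and] at this
      exact hirr i this
  constructor
  · exact fwd
  · intro hlt
    rcases (or_iff_not_imp_left.2 fun h1 => or_iff_not_imp_right.2 fun h2 => hsto.trichotomous i j h1 h2) with h | rfl | h
    · exact h
    · exact absurd hlt (lt_irrefl _)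
    · exact absurd hlt (Nat.lt_asymm (fwd h))

open Classical in
private lemma auxRank_lt_n {n : ℕ} {r : Fin n → Fin n → Prop}
    (hsto : IsStrictTotalOrder (Fin n) r) (i : Fin n) : auxRank r i < n := by
  have hss : (Finset.univ.filter fun j => r j i) ⊂ Finset.univ := by
    rw [Finset.ssubset_univ_iff]
    intro h
    have hi : i ∈ Finset.univ.filter fun j => r j i := by rw [h]; exact Finset.mem_univ i
    simp only [Finset.mem_filter, Finset.mem_univ, true_and] at hi
    exact hsto.irrefl i hi
  exact lt_of_lt_of_eq (Finset.card_lt_card hss) (Finset.card_univ.trans (Fintype.card_fin n))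

/-- the embedding attached to a strict total order -/
private noncomputable def auxEmb {n : ℕ} (r : Fin n → Fin n → Prop)
    (hsto : IsStrictTotalOrder (Fin n) r) : Fin n ↪ Fin n where
  toFun i := ⟨auxRank r i, auxRank_lt_n hsto i⟩
  inj' := by
    intro i j hij
    have h : auxRank r i = auxRank r j := congrArg Fin.val hij
    rcases (or_iff_not_imp_left.2 fun h1 => or_iff_not_imp_right.2 fun h2 => hsto.trichotomous i j h1 h2) with hr | rfl | hr
    · exact absurd ((auxRank_lt_iff hsto).1 hr) (by omega)
    · rfl
    · exact absurd ((auxRank_lt_iff hsto).1 hr) (by omega)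

private lemma auxEmb_inj {n : ℕ} {r r' : Fin n → Fin n → Prop}
    (h : IsStrictTotalOrder (Fin n) r) (h' : IsStrictTotalOrder (Fin n) r')
    (he : auxEmb r h = auxEmb r' h') : r = r' := by
  have hrank : ∀ i, auxRank r i = auxRank r' i := by
    intro i
    have h2 := congrFun (congrArg (fun (e : Fin n ↪ Fin n) => (e : Fin n → Fin n)) he) i
    exact congrArg Fin.val h2
  funext i j
  apply propext
  rw [auxRank_lt_iff h, auxRank_lt_iff h', hrank i, hrank j]

/-- no two distinct words of a lex-code are prefix-comparable -/
private lemma aux_no_prefix {n : ℕ} {X : Set (List (Fin n))} (hX : IsLexCode n X)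
    {y z : List (Fin n)} (hy : y ∈ X) (hz : z ∈ X) (hne : y ≠ z) (hpre : y <+: z) :
    False := by
  obtain ⟨r, hsto, hmin, -⟩ := hX.2.1 z hz
  have h1 : List.Lex r z y := hmin.2 y hy hne
  have h2 : List.Lex r y z := aux_lex_of_prefix hpre hne
  exact aux_lex_asymm (fun a b hab hba => hsto.irrefl a (hsto.trans a b a hab hba))
    (fun a => hsto.irrefl a) h2 h1

/-- cardinality bound: a nodup list enumerating a lex-code has length at most `n !` -/
private lemma aux_card_le {n : ℕ} {X : Set (List (Fin n))} (hX : IsLexCode n X)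
    {L : List (List (Fin n))} (hnd : L.Nodup) (hmem : ∀ x, x ∈ L ↔ x ∈ X) :
    L.length ≤ n.factorial := by
  classical
  choose R hsto hmin _ using hX.2.1
  let F : List (Fin n) → (Fin n ↪ Fin n) := fun x =>
    if hx : x ∈ X then auxEmb (R x hx) (hsto x hx) else Function.Embedding.refl _
  have hinj : ∀ a ∈ L.toFinset, ∀ b ∈ L.toFinset, F a = F b → a = b := by
    intro x hxm y hym hFxy
    rw [List.mem_toFinset] at hxm hym
    have hx : x ∈ X := (hmem x).1 hxm
    have hy : y ∈ X := (hmem y).1 hym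
    by_contra hne
    simp only [F, dif_pos hx, dif_pos hy] at hFxy
    have hr := auxEmb_inj (hsto x hx) (hsto y hy) hFxy
    have h1 : List.Lex (R x hx) x y := (hmin x hx).2 y hy (Ne.symm hne)
    have h2 : List.Lex (R x hx) y x := by
      rw [hr]; exact (hmin y hy).2 x hx hne
    have hs := hsto x hx
    exact aux_lex_asymm (fun a b hab hba => hs.irrefl a (hs.trans a b a hab hba))
      (fun a => hs.irrefl a) h1 h2
  have hcard : L.toFinset.card ≤ (Finset.univ : Finset (Fin n ↪ Fin n)).card :=
    Finset.card_le_card_of_injOn F (fun a _ => Finset.mem_univ (F a)) hinj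
  rw [List.toFinset_card_of_nodup hnd, Finset.card_univ] at hcard
  calc L.length ≤ Fintype.card (Fin n ↪ Fin n) := hcard
    _ = n.factorial := by
        rw [Fintype.card_embedding_eq]
        simp [Nat.descFactorial_self]

private lemma aux_drop_prefix {α : Type*} {l m : List α} {a : α}
    (hne : l ≠ []) (h : l <+: a :: m) : l.drop 1 <+: m := by
  cases l with
  | nil => exact absurd rfl hne
  | cons b t =>
    rw [List.cons_prefix_cons] at h
    simpa using h.2

private lemma aux_headI_eq {α : Type*} [Inhabited α] {l : List α} (h0 : 0 < l.length) :
    l[0]'h0 = l.headI := by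
  cases l with
  | nil => simp at h0
  | cons a t => rfl

/-- If a lex-code `X` of degree `n` contains a word longer than `n!`, then `X` is not
Hamiltonian. -/
theorem stmt_17 (n : ℕ) (X : Set (List (Fin n))) (hX : IsLexCode n X)
    (h : ∃ x ∈ X, Nat.factorial n < x.length) :
    ¬ HasHamiltonianCycle X := by
  classical
  rintro ⟨L, hcne, hnd, hmem, hedge⟩
  obtain ⟨x, hx, hlen⟩ := h
  -- n is positive, since x is a nonempty word over Fin n
  have hxne : x ≠ [] := hX.1 x hx
  have hn : 0 < n := by
    rcases x with _ | ⟨a, t⟩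
    · exact absurd rfl hxne
    · exact a.pos
  haveI : Inhabited (Fin n) := ⟨⟨0, hn⟩⟩
  set N := L.length with hN
  have hNpos : 0 < N := List.length_pos_iff.2 hcne
  have hNle : N ≤ n.factorial := aux_card_le hX hnd hmem
  have hNlt : N < x.length := lt_of_le_of_lt hNle hlen
  -- the cyclic vertex function and letter sequence
  let f : ℕ → List (Fin n) := fun k => L[k % N]'(Nat.mod_lt _ hNpos)
  let s : ℕ → Fin n := fun k => (f k).headI
  have hfX : ∀ k, f k ∈ X := fun k => (hmem _).1 (List.getElem_mem _)
  have hfne : ∀ k, f k ≠ [] := fun k => hX.1 _ (hfX k)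
  have hfpos : ∀ k, 0 < (f k).length := fun k => List.length_pos_iff.2 (hfne k)
  have hfper : ∀ k, f (k + N) = f k := by
    intro k
    simp only [f]
    congr 1
    exact Nat.add_mod_right k N
  have hsper : ∀ k, s (k + N) = s k := fun k => congrArg List.headI (hfper k)
  -- consecutive edge property
  have hstep : ∀ k, (f k).drop 1 <+: f (k + 1) := by
    intro k
    have hklt' : k % N < (L.rotate 1).length := by
      rw [List.length_rotate]; exact Nat.mod_lt _ hNpos
    have hklt : k % N < (L.zip (L.rotate 1)).length := by
      rw [List.length_zip, List.length_rotate]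
      simpa using Nat.mod_lt _ hNpos
    have hpair : (L[k % N]'(Nat.mod_lt _ hNpos), (L.rotate 1)[k % N]'hklt')
        ∈ L.zip (L.rotate 1) := by
      have := List.getElem_mem hklt
      rwa [List.getElem_zip] at this
    have hSX := hedge _ hpair
    obtain ⟨-, -, a, hpre⟩ := hSX
    have hrot : (L.rotate 1)[k % N]'hklt' = f (k + 1) := by
      rw [List.getElem_rotate]
      simp only [f]
      congr 1
      rw [← hN]
      exact Nat.mod_add_mod k N 1
    rw [hrot] at hpre
    exact aux_drop_prefix (hfne k) hpre
  -- entries of f k are given by s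
  have hget : ∀ (i k : ℕ) (hik : i < (f k).length), (f k)[i]'hik = s (k + i) := by
    intro i
    induction i with
    | zero =>
      intro k hik
      rw [Nat.add_zero]
      exact aux_headI_eq hik
    | succ i ih =>
      intro k hik
      have hd := hstep k
      have h1 : i < ((f k).drop 1).length := by
        rw [List.length_drop]; omega
      have h2 : i < (f (k + 1)).length := lt_of_lt_of_le h1 hd.length_le
      have e1 : (f k)[i + 1]'hik = ((f k).drop 1)[i]'h1 := by
        rw [List.getElem_drop]
        congr 1
        omega
      have e2 : ((f k).drop 1)[i]'h1 = (f (k + 1))[i]'h2 := hd.getElem h1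
      rw [e1, e2, ih (k + 1) h2]
      congr 1
      omega
  -- iterated periodicity
  have hsmul : ∀ (q k : ℕ), s (k + N * q) = s k := by
    intro q
    induction q with
    | zero => intro k; simp
    | succ q ih =>
      intro k
      have : k + N * (q + 1) = (k + N) + N * q := by ring
      rw [this, ih (k + N), hsper k]
  -- the index of x in the cycle
  obtain ⟨k₀, hk₀lt, hk₀⟩ := List.getElem_of_mem ((hmem x).2 hx)
  have hxf : x = f k₀ := by
    rw [← hk₀]
    simp only [f]
    congr 1
    exact (Nat.mod_eq_of_lt hk₀lt).symm
  -- the prefix of x of length N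
  set p := x.take N with hp
  have hplen : p.length = N := by
    rw [hp, List.length_take]; omega
  have hppre : p <+: x := List.take_prefix N x
  have hpne : p ≠ [] := by
    intro h0; rw [h0] at hplen; simp at hplen; omega
  have hpx : p ≠ x := by
    intro h0
    have := congrArg List.length h0
    rw [hplen] at this
    omega
  obtain ⟨y, hy, z, hz, hyz, hpy, hpz⟩ := hX.2.2 x hx p hppre hpne hpx
  -- any word of X containing p as prefix has all entries equal to s (k₀ + ·)
  have hExt : ∀ w : List (Fin n), w ∈ X → p <+: w →
      ∀ (i : ℕ) (hi : i < w.length), w[i]'hi = s (k₀ + i) := by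
    intro w hw hpw
    obtain ⟨j, hjlt, hj⟩ := List.getElem_of_mem ((hmem w).2 hw)
    have hwf : w = f j := by
      rw [← hj]; simp only [f]; congr 1; exact (Nat.mod_eq_of_lt hjlt).symm
    have hbase : ∀ i, i < N → s (j + i) = s (k₀ + i) := by
      intro i hi
      have hiw : i < w.length := by
        have := hpw.length_le; omega
      have hix : i < x.length := by omega
      have h1 : w[i]'hiw = p[i]'(by omega) := (hpw.getElem (by omega)).symm
      have h2 : x[i]'hix = p[i]'(by omega) := (hppre.getElem (by omega)).symm
      have h3 : w[i]'hiw = s (j + i) := by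
        have := hget i j (by rw [← hwf]; exact hiw)
        simpa [← hwf] using this
      have h4 : x[i]'hix = s (k₀ + i) := by
        have := hget i k₀ (by rw [← hxf]; exact hix)
        simpa [← hxf] using this
      rw [← h3, h1, ← h2, h4]
    have hall : ∀ m : ℕ, s (j + m) = s (k₀ + m) := by
      intro m
      have hm : m = m % N + N * (m / N) := (Nat.mod_add_div m N).symm
      calc s (j + m) = s (j + m % N + N * (m / N)) := by rw [Nat.add_assoc, ← hm]
        _ = s (j + m % N) := hsmul _ _
        _ = s (k₀ + m % N) := hbase _ (Nat.mod_lt _ hNpos)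
        _ = s (k₀ + m % N + N * (m / N)) := (hsmul _ _).symm
        _ = s (k₀ + m) := by rw [Nat.add_assoc, ← hm]
    intro i hi
    have h3 : w[i]'hi = s (j + i) := by
      have := hget i j (by rw [← hwf]; exact hi)
      simpa [← hwf] using this
    rw [h3, hall i]
  -- two words whose entries are all s (k₀ + ·) are prefix-comparable
  have hcomp : ∀ u v : List (Fin n), u ∈ X → v ∈ X → p <+: u → p <+: v →
      u.length ≤ v.length → u <+: v := by
    intro u v hu hv hpu hpv hle
    rw [List.prefix_iff_eq_take]
    apply List.ext_getElem
    · rw [List.length_take]; omega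
    · intro i h1 h2
      rw [List.getElem_take]
      rw [hExt u hu hpu i h1, hExt v hv hpv i (by omega)]
  rcases le_total y.length z.length with hle | hle
  · exact aux_no_prefix hX hy hz hyz (hcomp y z hy hz hpy hpz hle)
  · exact aux_no_prefix hX hz hy (Ne.symm hyz) (hcomp z y hz hy hpz hpy hle)
end
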